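/- arXiv:2502.14371 — 3 statements merged into one kernel-verified Lean document; each statement's English description precedes it below -/
import Mathlib

section
/- (Nesting lemma.) Let H be a complete bipartite graph with finite parts (A,B) whose edge weights are drawn independently from a non-atomic probability distribution supported on [0,1]. Then almost surely, for every A' ⊆ A, B' ⊆ B and every r with 1 < r ≤ min(|A'|,|B'|), every vertex covered by the maximum-weight matching with r−1 edges in H[A',B'] is also covered by the maximum-weight matching with r edges in H[A',B']. -/
open MeasureTheory ProbabilityTheory Filter
open scoped ENNReal

namespace ClassEF

variable {A B : Type*}

/-- A set of edges of a bipartite graph is a matching if every vertex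
appears in at most one edge. -/
def IsMatching (M : Finset (A × B)) : Prop :=
  (∀ e ∈ M, ∀ e' ∈ M, e.1 = e'.1 → e = e') ∧
  (∀ e ∈ M, ∀ e' ∈ M, e.2 = e'.2 → e = e')

/-- Total weight of a set of edges. -/
def weightSum (w : A → B → ℝ) (M : Finset (A × B)) : ℝ :=
  ∑ e ∈ M, w e.1 e.2

/-- A left vertex is covered by a matching. -/
def coveredA (M : Finset (A × B)) (a : A) : Prop := ∃ b, (a, b) ∈ M

/-- A right vertex is covered by a matching. -/
def coveredB (M : Finset (A × B)) (b : B) : Prop := ∃ a, (a, b) ∈ M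

/-- `M` is a maximum-weight matching among the matchings with `r` edges in the
(complete bipartite) subgraph induced by `A'` and `B'`. -/
def IsMaxMatchingOfSize [DecidableEq A] [DecidableEq B]
    (w : A → B → ℝ) (A' : Finset A) (B' : Finset B) (r : ℕ)
    (M : Finset (A × B)) : Prop :=
  IsMatching M ∧ M ⊆ A' ×ˢ B' ∧ M.card = r ∧
  ∀ M' : Finset (A × B), IsMatching M' → M' ⊆ A' ×ˢ B' → M'.card = r →
    weightSum w M' ≤ weightSum w M

/-- `M` is a maximum-weight matching (among matchings of arbitrary size). -/
def IsMaxWeightMatching (w : A → B → ℝ) (M : Finset (A × B)) : Prop :=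
  IsMatching M ∧ ∀ M' : Finset (A × B), IsMatching M' → weightSum w M' ≤ weightSum w M

open scoped Classical in
/-- The assignment valuation: the maximum total weight of a matching between
the agents of `Np` and the items of `S`. -/
noncomputable def vval [DecidableEq A] [DecidableEq B]
    (w : A → B → ℝ) (Np : Finset A) (S : Finset B) : ℝ :=
  ((Np ×ˢ S).powerset.filter fun M => IsMatching M).sup'
    ⟨∅, by simp [IsMatching]⟩ (weightSum w)

/-- The set of items matched to an agent of `S` under the matching `M`. -/
def bundleOf [DecidableEq A] [DecidableEq B] (M : Finset (A × B)) (S : Finset A) : Finset B :=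
  (M.filter fun e => e.1 ∈ S).image Prod.snd

/-- The total utility received by the agents of `S` under the matching `M`. -/
def classUtil [DecidableEq A] (w : A → B → ℝ) (M : Finset (A × B)) (S : Finset A) : ℝ :=
  ∑ e ∈ M.filter (fun e => e.1 ∈ S), w e.1 e.2

/-- Class envy-freeness. -/
def ClassEnvyFree [DecidableEq A] [DecidableEq B] {k : ℕ}
    (w : A → B → ℝ) (cls : Fin k → Finset A) (M : Finset (A × B)) : Prop :=
  ∀ p q : Fin k, p ≠ q → vval w (cls p) (bundleOf M (cls q)) ≤ classUtil w M (cls p)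

/-- Item `j` is wasted for the matching `M`. -/
def Wasted [DecidableEq A] [DecidableEq B] {k : ℕ}
    (w : A → B → ℝ) (cls : Fin k → Finset A) (M : Finset (A × B)) (j : B) : Prop :=
  ((∀ i : A, (i, j) ∉ M) ∧
    ∃ p, vval w (cls p) (bundleOf M (cls p)) < vval w (cls p) (insert j (bundleOf M (cls p)))) ∨
  (∃ q, j ∈ bundleOf M (cls q) ∧
    vval w (cls q) (bundleOf M (cls q)) = vval w (cls q) ((bundleOf M (cls q)).erase j) ∧
    ∃ p, p ≠ q ∧
      vval w (cls p) (bundleOf M (cls p)) < vval w (cls p) (insert j (bundleOf M (cls p))))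

/-- A matching is non-wasteful if no item is wasted. -/
def NonWasteful [DecidableEq A] [DecidableEq B] {k : ℕ}
    (w : A → B → ℝ) (cls : Fin k → Finset A) (M : Finset (A × B)) : Prop :=
  ∀ j : B, ¬ Wasted w cls M j

/-- `cls` partitions the agents into `k` disjoint nonempty classes. -/
def IsClassPartition {n k : ℕ} (cls : Fin k → Finset (Fin n)) : Prop :=
  (∀ p, (cls p).Nonempty) ∧ (∀ p q : Fin k, p ≠ q → Disjoint (cls p) (cls q)) ∧
  Finset.univ.biUnion cls = (Finset.univ : Finset (Fin n))

/-- The maximum class size. -/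
def maxClassSize {n k : ℕ} (cls : Fin k → Finset (Fin n)) : ℕ :=
  Finset.univ.sup fun p => (cls p).card

/-- The minimum class size. -/
noncomputable def minClassSize {n k : ℕ} (cls : Fin k → Finset (Fin n)) : ℕ :=
  sInf (Set.range fun p => (cls p).card)

/-- Marginal value of the item `j` for the bundle `S` of a class with agent set `Np`. -/
noncomputable def marginalVal [DecidableEq A] [DecidableEq B]
    (w : A → B → ℝ) (Np : Finset A) (S : Finset B) (j : B) : ℝ :=
  vval w Np (insert j S) - vval w Np S

/-- The items remaining once each class `p` holds the bundle `Bu p`. -/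
def remainingItems [Fintype B] [DecidableEq B] {k : ℕ} (Bu : Fin k → Finset B) : Finset B :=
  Finset.univ \ Finset.univ.biUnion Bu

/-- One selection step of class `p` in the round-robin algorithm, acting on the
tuple of current bundles: if some remaining item has positive marginal value,
class `p` adds to its bundle a remaining item of maximum marginal value;
otherwise nothing happens. -/
def ClassStep [Fintype B] [DecidableEq A] [DecidableEq B] {k : ℕ}
    (w : A → B → ℝ) (cls : Fin k → Finset A) (p : Fin k)
    (Bu Bu' : Fin k → Finset B) : Prop :=
  (∃ j ∈ remainingItems Bu,
      0 < marginalVal w (cls p) (Bu p) j ∧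
      (∀ j' ∈ remainingItems Bu,
        marginalVal w (cls p) (Bu p) j' ≤ marginalVal w (cls p) (Bu p) j) ∧
      Bu' = Function.update Bu p (insert j (Bu p))) ∨
  ((∀ j ∈ remainingItems Bu, marginalVal w (cls p) (Bu p) j ≤ 0) ∧ Bu' = Bu)

/-- One round of the round-robin algorithm: the classes `p = 0, …, k-1` perform
their selection steps in increasing order. -/
def RoundStep [Fintype B] [DecidableEq A] [DecidableEq B] {k : ℕ}
    (w : A → B → ℝ) (cls : Fin k → Finset A) (Bu Bu' : Fin k → Finset B) : Prop :=
  ∃ f : Fin (k + 1) → Fin k → Finset B,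
    f 0 = Bu ∧ f (Fin.last k) = Bu' ∧
    ∀ p : Fin k, ClassStep w cls p (f p.castSucc) (f p.succ)

/-- `M` is a possible output of the round-robin algorithm: starting from empty
bundles, rounds are performed until no class assigns positive marginal value to
any remaining item, and `M` is obtained by matching each class `p` with its final
bundle `Bu p` via a maximum-weight matching. -/
def IsRoundRobinOutput [Fintype B] [DecidableEq A] [DecidableEq B] {k : ℕ}
    (w : A → B → ℝ) (cls : Fin k → Finset A) (M : Finset (A × B)) : Prop :=
  ∃ Bu : Fin k → Finset B,
    Relation.ReflTransGen (RoundStep w cls) (fun _ => ∅) Bu ∧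
    (∀ p, ∀ j ∈ remainingItems Bu, marginalVal w (cls p) (Bu p) j ≤ 0) ∧
    IsMatching M ∧
    (∀ p : Fin k, ∀ e ∈ M, e.1 ∈ cls p → e.2 ∈ Bu p) ∧
    (∀ p : Fin k, classUtil w M (cls p) = vval w (cls p) (Bu p))

/-- An `(α,β)`-PDF-bounded distribution on `[0,1]`: it has a density bounded
between `a` and `b` on `[0,1]` and vanishing outside `[0,1]`. -/
def PDFBounded (D : Measure ℝ) (a b : ℝ) : Prop :=
  ∃ f : ℝ → ℝ,
    (∀ x ∈ Set.Icc (0 : ℝ) 1, a ≤ f x ∧ f x ≤ b) ∧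
    (∀ x, x ∉ Set.Icc (0 : ℝ) 1 → f x = 0) ∧
    D = MeasureTheory.volume.withDensity fun x => ENNReal.ofReal (f x)

/-- The reversed exponential distribution `ReExp(λ)`, with density
`λ e^{-λ(1-x)}` on `(-∞, 1]`. -/
noncomputable def reExp (lam : ℝ) : Measure ℝ :=
  MeasureTheory.volume.withDensity fun x =>
    ENNReal.ofReal (if x ≤ 1 then lam * Real.exp (-lam * (1 - x)) else 0)

/-- An acceptable alternating path of length `ℓ` for the threshold `w0`, of the
matching `Mopt`, inside the bipartite graph on right vertex set `S`: it visits
distinct matched left vertices `i 0, …, i (ℓ-1)` and ends in an unmatched right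
vertex `j'`, and all its non-matching edges have weight at least `w0`. -/
def AcceptablePath (w : A → B → ℝ) (S : Finset B)
    (Mopt : Finset (A × B)) (w0 : ℝ) (ℓ : ℕ) : Prop :=
  ∃ hℓ : 0 < ℓ, ∃ (i : Fin ℓ → A) (b : Fin ℓ → B) (j' : B),
    Function.Injective i ∧
    (∀ t, (i t, b t) ∈ Mopt) ∧
    j' ∈ S ∧ (∀ a : A, (a, j') ∉ Mopt) ∧
    (∀ t : Fin ℓ, ∀ ht : (t : ℕ) + 1 < ℓ, w0 ≤ w (i t) (b ⟨(t : ℕ) + 1, ht⟩)) ∧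
    w0 ≤ w (i ⟨ℓ - 1, Nat.sub_lt hℓ Nat.one_pos⟩) j'

/-- An acceptable alternating cycle of length `ℓ` for the threshold `w0`, of the
matching `Mopt`: it visits distinct matched left vertices `i 0, …, i (ℓ-1)` and
all its non-matching edges have weight at least `w0`. -/
def AcceptableCycle (w : A → B → ℝ)
    (Mopt : Finset (A × B)) (w0 : ℝ) (ℓ : ℕ) : Prop :=
  ∃ hℓ : 0 < ℓ, ∃ (i : Fin ℓ → A) (b : Fin ℓ → B),
    Function.Injective i ∧
    (∀ t, (i t, b t) ∈ Mopt) ∧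
    ∀ t : Fin ℓ, w0 ≤ w (i t) (b ⟨((t : ℕ) + 1) % ℓ, Nat.mod_lt _ hℓ⟩)

end ClassEF


set_option linter.unusedSectionVars false

namespace NestingAux

variable {A B : Type*} [DecidableEq A] [DecidableEq B]

/-- adjacency of two edges -/
def Adj (e f : A × B) : Prop := e ≠ f ∧ (e.1 = f.1 ∨ e.2 = f.2)

lemma Adj.symm {e f : A × B} (h : Adj e f) : Adj f e :=
  ⟨h.1.symm, h.2.imp Eq.symm Eq.symm⟩

/-- reachability within an edge set -/
def Reach (C : Finset (A × B)) (e f : A × B) : Prop :=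
  Relation.ReflTransGen (fun x y => y ∈ C ∧ Adj x y) e f

open Classical in
noncomputable def comp (D : Finset (A × B)) (e₀ : A × B) : Finset (A × B) :=
  D.filter (fun f => Reach D e₀ f)

def Closed (D C : Finset (A × B)) : Prop :=
  C ⊆ D ∧ ∀ f ∈ C, ∀ g ∈ D, Adj f g → g ∈ C

lemma mem_comp {D : Finset (A × B)} {e₀ f : A × B} :
    f ∈ comp D e₀ ↔ f ∈ D ∧ Reach D e₀ f := by
  classical
  simp [comp]

lemma self_mem_comp {D : Finset (A × B)} {e₀ : A × B} (h : e₀ ∈ D) : e₀ ∈ comp D e₀ :=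
  mem_comp.2 ⟨h, Relation.ReflTransGen.refl⟩

lemma comp_closed {D : Finset (A × B)} (e₀ : A × B) : Closed D (comp D e₀) := by
  refine ⟨fun f hf => (mem_comp.1 hf).1, fun f hf g hg hadj => ?_⟩
  exact mem_comp.2 ⟨hg, (mem_comp.1 hf).2.tail ⟨hg, hadj⟩⟩

lemma closed_union {D C C' : Finset (A × B)} (h : Closed D C) (h' : Closed D C') :
    Closed D (C ∪ C') := by
  refine ⟨Finset.union_subset h.1 h'.1, fun f hf g hg hadj => ?_⟩
  rcases Finset.mem_union.1 hf with hf | hf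
  · exact Finset.mem_union.2 (Or.inl (h.2 f hf g hg hadj))
  · exact Finset.mem_union.2 (Or.inr (h'.2 f hf g hg hadj))

lemma closed_sdiff {D C E : Finset (A × B)} (hE : Closed D E) (hC : Closed D C) :
    Closed D (E \ C) := by
  refine ⟨(Finset.sdiff_subset).trans hE.1, fun f hf g hg hadj => ?_⟩
  rcases Finset.mem_sdiff.1 hf with ⟨hfE, hfC⟩
  refine Finset.mem_sdiff.2 ⟨hE.2 f hfE g hg hadj, fun hgC => ?_⟩
  exact hfC (hC.2 g hgC f (hE.1 hfE) hadj.symm)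

lemma comp_subset_of_closed {D E : Finset (A × B)} (hE : Closed D E) {e : A × B}
    (he : e ∈ E) : comp D e ⊆ E := by
  intro f hf
  obtain ⟨hfD, hr⟩ := mem_comp.1 hf
  clear hfD hf
  induction hr with
  | refl => exact he
  | tail hab hbc ih => exact hE.2 _ ih _ hbc.1 hbc.2

lemma comp_reach {D : Finset (A × B)} {e₀ : A × B} (he₀ : e₀ ∈ D) :
    ∀ f ∈ comp D e₀, Reach (comp D e₀) e₀ f := by
  intro f hf
  obtain ⟨hfD, hr⟩ := mem_comp.1 hf
  clear hfD hf
  have : f ∈ comp D e₀ ∧ Reach (comp D e₀) e₀ f := by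
    induction hr with
    | refl => exact ⟨self_mem_comp he₀, Relation.ReflTransGen.refl⟩
    | @tail b c hab hbc ih =>
        have hc : c ∈ comp D e₀ := mem_comp.2 ⟨hbc.1, hab.tail hbc⟩
        exact ⟨hc, ih.2.tail ⟨hc, hbc.2⟩⟩
  exact this.2

/-- reachability with fuel -/
def reachN (C : Finset (A × B)) (e₀ : A × B) : ℕ → (A × B) → Prop
  | 0 => fun f => f = e₀
  | (n+1) => fun f => reachN C e₀ n f ∨ ∃ g, reachN C e₀ n g ∧ f ∈ C ∧ Adj g f

lemma reachN_mem {C : Finset (A × B)} {e₀ : A × B} (he₀ : e₀ ∈ C) :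
    ∀ {n f}, reachN C e₀ n f → f ∈ C := by
  intro n
  induction n with
  | zero => intro f hf; rw [show f = e₀ from hf]; exact he₀
  | succ n ih =>
      intro f hf
      rcases hf with hf | ⟨g, _, hfC, _⟩
      · exact ih hf
      · exact hfC

lemma reach_exists_reachN {C : Finset (A × B)} {e₀ f : A × B} (h : Reach C e₀ f) :
    ∃ n, reachN C e₀ n f := by
  induction h with
  | refl => exact ⟨0, rfl⟩
  | @tail b c hab hbc ih =>
      obtain ⟨n, hn⟩ := ih
      exact ⟨n + 1, Or.inr ⟨b, hn, hbc.1, hbc.2⟩⟩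

end NestingAux
section Part2
namespace NestingAux

variable {A B : Type*} [DecidableEq A] [DecidableEq B]

lemma card_vertices_le_aux : ∀ (n : ℕ) (C : Finset (A × B)), C.card = n → ∀ (e₀ : A × B),
    e₀ ∈ C → (∀ f ∈ C, Reach C e₀ f) →
    (C.image Prod.fst).card + (C.image Prod.snd).card ≤ C.card + 1 := by
  intro n
  induction n using Nat.strong_induction_on with
  | _ n ih =>
    intro C hn e₀ he₀ hreach
    by_cases hsing : ∀ f ∈ C, f = e₀
    · have hC : C = {e₀} := by
        apply Finset.eq_singleton_iff_unique_mem.2 ⟨he₀, hsing⟩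
      subst hC
      simp
    · push_neg at hsing
      obtain ⟨e', he'C, he'ne⟩ := hsing
      -- distance function
      have hex : ∀ f ∈ C, ∃ m, reachN C e₀ m f := fun f hf => reach_exists_reachN (hreach f hf)
      set d : A × B → ℕ := fun f => sInf {m | reachN C e₀ m f} with hd
      have d_spec : ∀ f ∈ C, reachN C e₀ (d f) f := by
        intro f hf
        exact Nat.sInf_mem (hex f hf)
      have d_min : ∀ f : A × B, ∀ m, reachN C e₀ m f → d f ≤ m := fun f m hm => Nat.sInf_le hm
      have d_zero : d e₀ = 0 := Nat.le_zero.1 (d_min e₀ 0 rfl)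
      -- pick e of maximal distance among C.erase e₀
      have hne : (C.erase e₀).Nonempty := ⟨e', Finset.mem_erase.2 ⟨he'ne, he'C⟩⟩
      obtain ⟨e, heC, hmax⟩ := Finset.exists_max_image (C.erase e₀) d hne
      have heC' : e ∈ C := Finset.mem_of_mem_erase heC
      have hene : e ≠ e₀ := (Finset.mem_erase.1 heC).1
      have hde_pos : 0 < d e := by
        rcases Nat.eq_zero_or_pos (d e) with h | h
        · exact absurd (d_spec e heC') (by rw [h]; exact fun hh => hene hh)
        · exact h
      -- predecessor of f at smaller distance
      have pred : ∀ f, f ∈ C → f ≠ e₀ → ∃ g, g ∈ C ∧ d g < d f ∧ Adj g f := by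
        intro f hf hfne
        have h1 : 0 < d f := by
          rcases Nat.eq_zero_or_pos (d f) with h | h
          · exact absurd (d_spec f hf) (by rw [h]; exact fun hh => hfne hh)
          · exact h
        obtain ⟨m, hm⟩ := Nat.exists_eq_succ_of_ne_zero h1.ne'
        have := d_spec f hf
        rw [hm] at this
        rcases this with h | ⟨g, hg, hfC, hadj⟩
        · exact absurd (d_min f m h) (by omega)
        · have hgC : g ∈ C := reachN_mem he₀ hg
          have : d g ≤ m := d_min g m hg
          exact ⟨g, hgC, by omega, hadj⟩
      -- C.erase e is still reach-closed
      have key : ∀ k f, f ∈ C.erase e → d f = k → Reach (C.erase e) e₀ f := by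
        intro k
        induction k using Nat.strong_induction_on with
        | _ k ihk =>
          intro f hf hdf
          by_cases hfe₀ : f = e₀
          · subst hfe₀; exact Relation.ReflTransGen.refl
          · obtain ⟨g, hgC, hdg, hadj⟩ := pred f (Finset.mem_of_mem_erase hf) hfe₀
            have hge : g ≠ e := by
              intro h
              subst h
              have : d f ≤ d g := hmax f (Finset.mem_erase.2 ⟨hfe₀, Finset.mem_of_mem_erase hf⟩)
              omega
            have hg' : g ∈ C.erase e := Finset.mem_erase.2 ⟨hge, hgC⟩
            have : Reach (C.erase e) e₀ g := ihk (d g) (by omega) g hg' rfl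
            exact this.tail ⟨hf, hadj⟩
      -- e is adjacent to some g in C.erase e
      obtain ⟨g, hgC, hdg, hadj⟩ := pred e heC' hene
      have hge : g ≠ e := fun h => by subst h; omega
      have hg' : g ∈ C.erase e := Finset.mem_erase.2 ⟨hge, hgC⟩
      -- apply induction hypothesis
      have hcard : (C.erase e).card < n := by
        rw [← hn]
        exact Finset.card_erase_lt_of_mem heC'
      have he₀' : e₀ ∈ C.erase e := Finset.mem_erase.2 ⟨fun h => hene h.symm, he₀⟩
      have hIH := ih (C.erase e).card hcard (C.erase e) rfl e₀ he₀'
        (fun f hf => key (d f) f hf rfl)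
      -- now add e back
      have hins : C = insert e (C.erase e) := (Finset.insert_erase heC').symm
      have him1 : C.image Prod.fst = insert e.1 ((C.erase e).image Prod.fst) := by
        conv_lhs => rw [hins]
        rw [Finset.image_insert]
      have him2 : C.image Prod.snd = insert e.2 ((C.erase e).image Prod.snd) := by
        conv_lhs => rw [hins]
        rw [Finset.image_insert]
      have hcards : (C.erase e).card + 1 = C.card := Finset.card_erase_add_one heC'
      rcases hadj.2 with h | h
      · have : e.1 ∈ (C.erase e).image Prod.fst := Finset.mem_image.2 ⟨g, hg', h⟩
        rw [him1, him2, Finset.insert_eq_self.2 this]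
        have := Finset.card_insert_le e.2 ((C.erase e).image Prod.snd)
        omega
      · have : e.2 ∈ (C.erase e).image Prod.snd := Finset.mem_image.2 ⟨g, hg', h⟩
        rw [him1, him2, Finset.insert_eq_self.2 this]
        have := Finset.card_insert_le e.1 ((C.erase e).image Prod.fst)
        omega

lemma card_vertices_le (C : Finset (A × B)) (e₀ : A × B) (he₀ : e₀ ∈ C)
    (hreach : ∀ f ∈ C, Reach C e₀ f) :
    (C.image Prod.fst).card + (C.image Prod.snd).card ≤ C.card + 1 :=
  card_vertices_le_aux C.card C rfl e₀ he₀ hreach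

end NestingAux
end Part2
section Part3
namespace NestingAux

open ClassEF

variable {A B : Type*} [DecidableEq A] [DecidableEq B]

/-- symmetric difference of the two matchings -/
def sd (M₁ M₂ : Finset (A × B)) : Finset (A × B) := (M₁ ∪ M₂) \ (M₁ ∩ M₂)

lemma sd_comm (M₁ M₂ : Finset (A × B)) : sd M₁ M₂ = sd M₂ M₁ := by
  simp [sd, Finset.union_comm, Finset.inter_comm]

variable {M₁ M₂ : Finset (A × B)}

lemma swap_isMatching (h₁ : IsMatching M₁) (h₂ : IsMatching M₂) {C : Finset (A × B)}
    (hC : Closed (sd M₁ M₂) C) : IsMatching ((M₁ \ C) ∪ (M₂ ∩ C)) := by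
  have key : ∀ e ∈ M₁ \ C, ∀ e' ∈ M₂ ∩ C, (e.1 = e'.1 ∨ e.2 = e'.2) → e = e' := by
    intro e he e' he' hco
    by_contra hne
    have heM₁ : e ∈ M₁ := (Finset.mem_sdiff.1 he).1
    have heC : e ∉ C := (Finset.mem_sdiff.1 he).2
    have he'M₂ : e' ∈ M₂ := (Finset.mem_inter.1 he').1
    have he'C : e' ∈ C := (Finset.mem_inter.1 he').2
    have heM₂ : e ∉ M₂ := by
      intro hm
      rcases hco with h | h
      · exact hne (h₂.1 e hm e' he'M₂ h)
      · exact hne (h₂.2 e hm e' he'M₂ h)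
    have heD : e ∈ sd M₁ M₂ := by
      simp [sd, heM₁, heM₂]
    exact heC (hC.2 e' he'C e heD ⟨fun h => hne h.symm, hco.imp Eq.symm Eq.symm⟩)
  constructor
  · intro e he e' he' hco
    rcases Finset.mem_union.1 he with he | he <;> rcases Finset.mem_union.1 he' with he' | he'
    · exact h₁.1 e (Finset.mem_sdiff.1 he).1 e' (Finset.mem_sdiff.1 he').1 hco
    · exact key e he e' he' (Or.inl hco)
    · exact (key e' he' e he (Or.inl hco.symm)).symm
    · exact h₂.1 e (Finset.mem_inter.1 he).1 e' (Finset.mem_inter.1 he').1 hco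
  · intro e he e' he' hco
    rcases Finset.mem_union.1 he with he | he <;> rcases Finset.mem_union.1 he' with he' | he'
    · exact h₁.2 e (Finset.mem_sdiff.1 he).1 e' (Finset.mem_sdiff.1 he').1 hco
    · exact key e he e' he' (Or.inr hco)
    · exact (key e' he' e he (Or.inr hco.symm)).symm
    · exact h₂.2 e (Finset.mem_inter.1 he).1 e' (Finset.mem_inter.1 he').1 hco

lemma swap_disjoint (M₁ M₂ C : Finset (A × B)) : Disjoint (M₁ \ C) (M₂ ∩ C) :=
  Finset.disjoint_right.2 fun e he hmem =>
    (Finset.mem_sdiff.1 hmem).2 (Finset.mem_inter.1 he).2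

lemma swap_card (M₁ M₂ C : Finset (A × B)) :
    ((M₁ \ C) ∪ (M₂ ∩ C)).card + (M₁ ∩ C).card = M₁.card + (M₂ ∩ C).card := by
  rw [Finset.card_union_of_disjoint (swap_disjoint M₁ M₂ C)]
  have := Finset.card_inter_add_card_sdiff M₁ C
  omega

lemma swap_weight (w : A → B → ℝ) (M₁ M₂ C : Finset (A × B)) :
    weightSum w ((M₁ \ C) ∪ (M₂ ∩ C)) + weightSum w (M₁ ∩ C) =
      weightSum w M₁ + weightSum w (M₂ ∩ C) := by
  unfold weightSum
  rw [Finset.sum_union (swap_disjoint M₁ M₂ C)]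
  have : ∑ e ∈ M₁ ∩ C, w e.1 e.2 + ∑ e ∈ M₁ \ C, w e.1 e.2 = ∑ e ∈ M₁, w e.1 e.2 :=
    Finset.sum_inter_add_sum_sdiff M₁ C _
  linarith

lemma swap_subset {A' : Finset A} {B' : Finset B} (hs₁ : M₁ ⊆ A' ×ˢ B') (hs₂ : M₂ ⊆ A' ×ˢ B')
    (C : Finset (A × B)) : (M₁ \ C) ∪ (M₂ ∩ C) ⊆ A' ×ˢ B' :=
  Finset.union_subset ((Finset.sdiff_subset).trans hs₁) ((Finset.inter_subset_left).trans hs₂)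

/-- No nonempty balanced closed subset of the symmetric difference exists
(given genericity of the weights and optimality of both matchings). -/
lemma balanced_closed_empty {w : A → B → ℝ}
    (hw : ∀ S T : Finset (A × B), weightSum w S = weightSum w T → S = T)
    {A' : Finset A} {B' : Finset B}
    (h₁ : IsMatching M₁) (hs₁ : M₁ ⊆ A' ×ˢ B')
    (h₂ : IsMatching M₂) (hs₂ : M₂ ⊆ A' ×ˢ B')
    (opt₁ : ∀ M', IsMatching M' → M' ⊆ A' ×ˢ B' → M'.card = M₁.card →
      weightSum w M' ≤ weightSum w M₁)
    (opt₂ : ∀ M', IsMatching M' → M' ⊆ A' ×ˢ B' → M'.card = M₂.card →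
      weightSum w M' ≤ weightSum w M₂)
    {C : Finset (A × B)} (hC : Closed (sd M₁ M₂) C)
    (hbal : (M₁ ∩ C).card = (M₂ ∩ C).card) : C = ∅ := by
  have hC' : Closed (sd M₂ M₁) C := by rw [sd_comm]; exact hC
  -- the first swap
  have hm1 : IsMatching ((M₁ \ C) ∪ (M₂ ∩ C)) := swap_isMatching h₁ h₂ hC
  have hc1 : ((M₁ \ C) ∪ (M₂ ∩ C)).card = M₁.card := by
    have := swap_card M₁ M₂ C; omega
  have hw1 := opt₁ _ hm1 (swap_subset hs₁ hs₂ C) hc1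
  have hineq1 : weightSum w (M₂ ∩ C) ≤ weightSum w (M₁ ∩ C) := by
    have := swap_weight w M₁ M₂ C; linarith
  -- the second swap
  have hm2 : IsMatching ((M₂ \ C) ∪ (M₁ ∩ C)) := swap_isMatching h₂ h₁ hC'
  have hc2 : ((M₂ \ C) ∪ (M₁ ∩ C)).card = M₂.card := by
    have := swap_card M₂ M₁ C; omega
  have hw2 := opt₂ _ hm2 (swap_subset hs₂ hs₁ C) hc2
  have hineq2 : weightSum w (M₁ ∩ C) ≤ weightSum w (M₂ ∩ C) := by
    have := swap_weight w M₂ M₁ C; linarith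
  have heq : M₁ ∩ C = M₂ ∩ C := hw _ _ (le_antisymm hineq2 hineq1)
  -- conclude C = ∅
  have hsub : M₁ ∩ C ⊆ M₁ ∩ M₂ := by
    intro e he
    exact Finset.mem_inter.2 ⟨(Finset.mem_inter.1 he).1,
      (Finset.mem_inter.1 (heq ▸ he)).1⟩
  have hempty1 : M₁ ∩ C = ∅ := by
    rw [Finset.eq_empty_iff_forall_notMem]
    intro e he
    have heC : e ∈ C := (Finset.mem_inter.1 he).2
    have := hC.1 heC
    rw [sd, Finset.mem_sdiff] at this
    exact this.2 (hsub he)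
  rw [Finset.eq_empty_iff_forall_notMem]
  intro e heC
  have := hC.1 heC
  rw [sd, Finset.mem_sdiff, Finset.mem_union] at this
  rcases this.1 with h | h
  · rw [Finset.eq_empty_iff_forall_notMem] at hempty1
    exact hempty1 e (Finset.mem_inter.2 ⟨h, heC⟩)
  · have : e ∈ M₂ ∩ C := Finset.mem_inter.2 ⟨h, heC⟩
    rw [← heq] at this
    rw [Finset.eq_empty_iff_forall_notMem] at hempty1
    exact hempty1 e this

end NestingAux
end Part3
section Part4
namespace NestingAux

open ClassEF

variable {A B : Type*} [DecidableEq A] [DecidableEq B]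
variable {M₁ M₂ : Finset (A × B)}

lemma comp_struct (h₁ : IsMatching M₁) (h₂ : IsMatching M₂) {C : Finset (A × B)}
    (hC : Closed (sd M₁ M₂) C) {e₀ : A × B} (he₀ : e₀ ∈ C)
    (hreach : ∀ f ∈ C, Reach C e₀ f) :
    ∃ sA sB : ℕ,
      (M₁ ∩ C).card + (M₂ ∩ C).card ≤ sA + sB + 1 ∧
      sA ≤ (M₁ ∩ C).card ∧ sA ≤ (M₂ ∩ C).card ∧
      sB ≤ (M₁ ∩ C).card ∧ sB ≤ (M₂ ∩ C).card ∧
      ((∃ a ∈ (M₁ ∩ C).image Prod.fst, a ∉ (M₂ ∩ C).image Prod.fst) →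
        sA + 1 ≤ (M₁ ∩ C).card) ∧
      ((∃ b ∈ (M₁ ∩ C).image Prod.snd, b ∉ (M₂ ∩ C).image Prod.snd) →
        sB + 1 ≤ (M₁ ∩ C).card) := by
  have hCC : C = (M₁ ∩ C) ∪ (M₂ ∩ C) := by
    apply Finset.Subset.antisymm
    · intro e he
      have h := hC.1 he
      rw [sd, Finset.mem_sdiff, Finset.mem_union] at h
      rcases h.1 with h' | h'
      · exact Finset.mem_union.2 (Or.inl (Finset.mem_inter.2 ⟨h', he⟩))
      · exact Finset.mem_union.2 (Or.inr (Finset.mem_inter.2 ⟨h', he⟩))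
    · intro e he
      rcases Finset.mem_union.1 he with h | h
      · exact (Finset.mem_inter.1 h).2
      · exact (Finset.mem_inter.1 h).2
  have himA1 : ((M₁ ∩ C).image Prod.fst).card = (M₁ ∩ C).card :=
    Finset.card_image_of_injOn fun e he e' he' h =>
      h₁.1 e (Finset.mem_inter.1 he).1 e' (Finset.mem_inter.1 he').1 h
  have himA2 : ((M₂ ∩ C).image Prod.fst).card = (M₂ ∩ C).card :=
    Finset.card_image_of_injOn fun e he e' he' h =>
      h₂.1 e (Finset.mem_inter.1 he).1 e' (Finset.mem_inter.1 he').1 h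
  have himB1 : ((M₁ ∩ C).image Prod.snd).card = (M₁ ∩ C).card :=
    Finset.card_image_of_injOn fun e he e' he' h =>
      h₁.2 e (Finset.mem_inter.1 he).1 e' (Finset.mem_inter.1 he').1 h
  have himB2 : ((M₂ ∩ C).image Prod.snd).card = (M₂ ∩ C).card :=
    Finset.card_image_of_injOn fun e he e' he' h =>
      h₂.2 e (Finset.mem_inter.1 he).1 e' (Finset.mem_inter.1 he').1 h
  have hu1 : C.image Prod.fst = (M₁ ∩ C).image Prod.fst ∪ (M₂ ∩ C).image Prod.fst := by
    conv_lhs => rw [hCC]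
    rw [Finset.image_union]
  have hu2 : C.image Prod.snd = (M₁ ∩ C).image Prod.snd ∪ (M₂ ∩ C).image Prod.snd := by
    conv_lhs => rw [hCC]
    rw [Finset.image_union]
  have hconn := card_vertices_le C e₀ he₀ hreach
  have hcard_le : C.card ≤ (M₁ ∩ C).card + (M₂ ∩ C).card := by
    conv_lhs => rw [hCC]
    exact Finset.card_union_le _ _
  refine ⟨((M₁ ∩ C).image Prod.fst ∩ (M₂ ∩ C).image Prod.fst).card,
    ((M₁ ∩ C).image Prod.snd ∩ (M₂ ∩ C).image Prod.snd).card, ?_, ?_, ?_, ?_, ?_, ?_, ?_⟩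
  · have hca := Finset.card_union_add_card_inter ((M₁ ∩ C).image Prod.fst)
      ((M₂ ∩ C).image Prod.fst)
    have hcb := Finset.card_union_add_card_inter ((M₁ ∩ C).image Prod.snd)
      ((M₂ ∩ C).image Prod.snd)
    rw [hu1, hu2] at hconn
    omega
  · rw [← himA1]; exact Finset.card_le_card Finset.inter_subset_left
  · rw [← himA2]; exact Finset.card_le_card Finset.inter_subset_right
  · rw [← himB1]; exact Finset.card_le_card Finset.inter_subset_left
  · rw [← himB2]; exact Finset.card_le_card Finset.inter_subset_right
  · rintro ⟨a, haIn, haOut⟩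
    have hsub : (M₁ ∩ C).image Prod.fst ∩ (M₂ ∩ C).image Prod.fst ⊆
        ((M₁ ∩ C).image Prod.fst).erase a := by
      intro x hx
      refine Finset.mem_erase.2 ⟨?_, (Finset.mem_inter.1 hx).1⟩
      intro h
      exact haOut (h ▸ (Finset.mem_inter.1 hx).2)
    have h1 := Finset.card_le_card hsub
    have h2 : (((M₁ ∩ C).image Prod.fst).erase a).card + 1 = ((M₁ ∩ C).image Prod.fst).card :=
      Finset.card_erase_add_one haIn
    omega
  · rintro ⟨b, hbIn, hbOut⟩
    have hsub : (M₁ ∩ C).image Prod.snd ∩ (M₂ ∩ C).image Prod.snd ⊆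
        ((M₁ ∩ C).image Prod.snd).erase b := by
      intro x hx
      refine Finset.mem_erase.2 ⟨?_, (Finset.mem_inter.1 hx).1⟩
      intro h
      exact hbOut (h ▸ (Finset.mem_inter.1 hx).2)
    have h1 := Finset.card_le_card hsub
    have h2 : (((M₁ ∩ C).image Prod.snd).erase b).card + 1 = ((M₁ ∩ C).image Prod.snd).card :=
      Finset.card_erase_add_one hbIn
    omega

lemma card_inter_split {C E : Finset (A × B)} (X : Finset (A × B)) (h : C ⊆ E) :
    (X ∩ C).card + (X ∩ (E \ C)).card = (X ∩ E).card := by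
  rw [← Finset.card_union_of_disjoint (Finset.disjoint_left.2
    fun x hx hy => (Finset.mem_sdiff.1 (Finset.mem_inter.1 hy).2).2 (Finset.mem_inter.1 hx).2)]
  congr 1
  ext x
  simp only [Finset.mem_union, Finset.mem_inter, Finset.mem_sdiff]
  constructor
  · rintro (⟨h1, h2⟩ | ⟨h1, h2⟩)
    exacts [⟨h1, h h2⟩, ⟨h1, h2.1⟩]
  · rintro ⟨h1, h2⟩
    by_cases hc : x ∈ C
    · exact Or.inl ⟨h1, hc⟩
    · exact Or.inr ⟨h1, h2, hc⟩

lemma exists_pos_comp {w : A → B → ℝ}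
    (hw : ∀ S T : Finset (A × B), weightSum w S = weightSum w T → S = T)
    {A' : Finset A} {B' : Finset B}
    (h₁ : IsMatching M₁) (hs₁ : M₁ ⊆ A' ×ˢ B')
    (h₂ : IsMatching M₂) (hs₂ : M₂ ⊆ A' ×ˢ B')
    (opt₁ : ∀ M', IsMatching M' → M' ⊆ A' ×ˢ B' → M'.card = M₁.card →
      weightSum w M' ≤ weightSum w M₁)
    (opt₂ : ∀ M', IsMatching M' → M' ⊆ A' ×ˢ B' → M'.card = M₂.card →
      weightSum w M' ≤ weightSum w M₂) :
    ∀ (n : ℕ) (E : Finset (A × B)), E.card ≤ n → Closed (sd M₁ M₂) E →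
      (M₁ ∩ E).card < (M₂ ∩ E).card →
      ∃ C, C ⊆ E ∧ Closed (sd M₁ M₂) C ∧ C.Nonempty ∧
        (M₂ ∩ C).card = (M₁ ∩ C).card + 1 := by
  intro n
  induction n with
  | zero =>
      intro E hE hcl hlt
      have : E = ∅ := Finset.card_eq_zero.1 (Nat.le_zero.1 hE)
      subst this
      simp at hlt
  | succ n ih =>
      intro E hEcard hE hlt
      have hne : (M₂ ∩ E).Nonempty := Finset.card_pos.1 (by omega)
      obtain ⟨e, he⟩ := hne
      have heE : e ∈ E := (Finset.mem_inter.1 he).2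
      have heD : e ∈ sd M₁ M₂ := hE.1 heE
      set C := comp (sd M₁ M₂) e with hCdef
      have hCc : Closed (sd M₁ M₂) C := comp_closed e
      have hsub : C ⊆ E := comp_subset_of_closed hE heE
      have heC : e ∈ C := self_mem_comp heD
      have hreach := comp_reach heD
      obtain ⟨sA, sB, hf1, hf2, hf3, hf4, hf5, _, _⟩ :=
        comp_struct h₁ h₂ hCc heC hreach
      have hnebal : (M₁ ∩ C).card ≠ (M₂ ∩ C).card := by
        intro h
        have := balanced_closed_empty hw h₁ hs₁ h₂ hs₂ opt₁ opt₂ hCc h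
        rw [this] at heC
        exact absurd heC (Finset.notMem_empty e)
      by_cases hcase : (M₂ ∩ C).card = (M₁ ∩ C).card + 1
      · exact ⟨C, hsub, hCc, ⟨e, heC⟩, hcase⟩
      · have hc12 : (M₁ ∩ C).card = (M₂ ∩ C).card + 1 := by omega
        have hE' : Closed (sd M₁ M₂) (E \ C) := closed_sdiff hE hCc
        have hspl1 := card_inter_split (C := C) (E := E) M₁ hsub
        have hspl2 := card_inter_split (C := C) (E := E) M₂ hsub
        have hlt' : (M₁ ∩ (E \ C)).card < (M₂ ∩ (E \ C)).card := by omega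
        have hcard' : (E \ C).card ≤ n := by
          have h1 : (E \ C).card = E.card - C.card := Finset.card_sdiff_of_subset hsub
          have h2 : 1 ≤ C.card := Finset.card_pos.2 ⟨e, heC⟩
          have h3 : C.card ≤ E.card := Finset.card_le_card hsub
          omega
        obtain ⟨C', hC'sub, hC'cl, hC'ne, hC'bal⟩ := ih (E \ C) hcard' hE' hlt'
        exact ⟨C', hC'sub.trans Finset.sdiff_subset, hC'cl, hC'ne, hC'bal⟩

set_option maxHeartbeats 1000000 in
/-- The core argument: an `M₁`-covered, `M₂`-uncovered vertex yields a contradiction. -/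
lemma nesting_core {w : A → B → ℝ}
    (hw : ∀ S T : Finset (A × B), weightSum w S = weightSum w T → S = T)
    {A' : Finset A} {B' : Finset B}
    (h₁ : IsMatching M₁) (hs₁ : M₁ ⊆ A' ×ˢ B')
    (h₂ : IsMatching M₂) (hs₂ : M₂ ⊆ A' ×ˢ B')
    (hcard : M₂.card = M₁.card + 1)
    (opt₁ : ∀ M', IsMatching M' → M' ⊆ A' ×ˢ B' → M'.card = M₁.card →
      weightSum w M' ≤ weightSum w M₁)
    (opt₂ : ∀ M', IsMatching M' → M' ⊆ A' ×ˢ B' → M'.card = M₂.card →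
      weightSum w M' ≤ weightSum w M₂)
    {e₀ : A × B} (he₁ : e₀ ∈ M₁)
    (hcond : (∀ e ∈ M₂, e.1 ≠ e₀.1) ∨ (∀ e ∈ M₂, e.2 ≠ e₀.2)) : False := by
  have he₂ : e₀ ∉ M₂ := by
    intro h
    rcases hcond with hc | hc
    · exact hc e₀ h rfl
    · exact hc e₀ h rfl
  set D := sd M₁ M₂ with hDdef
  have he₀D : e₀ ∈ D := by
    simp only [hDdef, sd, Finset.mem_sdiff, Finset.mem_union, Finset.mem_inter]
    exact ⟨Or.inl he₁, fun h => he₂ h.2⟩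
  set C := comp D e₀ with hCdef
  have hCc : Closed D C := comp_closed e₀
  have heC : e₀ ∈ C := self_mem_comp he₀D
  have hreach := comp_reach he₀D
  obtain ⟨sA, sB, hf1, hf2, hf3, hf4, hf5, hfA, hfB⟩ := comp_struct h₁ h₂ hCc heC hreach
  have hnebal : (M₁ ∩ C).card ≠ (M₂ ∩ C).card := by
    intro h
    have := balanced_closed_empty hw h₁ hs₁ h₂ hs₂ opt₁ opt₂ hCc h
    rw [this] at heC
    exact absurd heC (Finset.notMem_empty e₀)
  -- the side condition gives the strict bound
  have hside : sA + 1 ≤ (M₁ ∩ C).card ∨ sB + 1 ≤ (M₁ ∩ C).card := by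
    have he₀MC : e₀ ∈ M₁ ∩ C := Finset.mem_inter.2 ⟨he₁, heC⟩
    rcases hcond with hc | hc
    · refine Or.inl (hfA ⟨e₀.1, Finset.mem_image.2 ⟨e₀, he₀MC, rfl⟩, ?_⟩)
      intro h
      obtain ⟨e, heMC, heq⟩ := Finset.mem_image.1 h
      exact hc e (Finset.mem_inter.1 heMC).1 heq
    · refine Or.inr (hfB ⟨e₀.2, Finset.mem_image.2 ⟨e₀, he₀MC, rfl⟩, ?_⟩)
      intro h
      obtain ⟨e, heMC, heq⟩ := Finset.mem_image.1 h
      exact hc e (Finset.mem_inter.1 heMC).1 heq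
  have hc12 : (M₁ ∩ C).card = (M₂ ∩ C).card + 1 := by omega
  -- global count
  have hMD1 : M₁ ∩ D = M₁ \ M₂ := by
    ext x
    simp only [hDdef, sd, Finset.mem_inter, Finset.mem_sdiff, Finset.mem_union]
    tauto
  have hMD2 : M₂ ∩ D = M₂ \ M₁ := by
    ext x
    simp only [hDdef, sd, Finset.mem_inter, Finset.mem_sdiff, Finset.mem_union,
      Finset.mem_inter]
    tauto
  have hg1 := Finset.card_inter_add_card_sdiff M₁ M₂
  have hg2 := Finset.card_inter_add_card_sdiff M₂ M₁
  have hg3 : (M₁ ∩ M₂).card = (M₂ ∩ M₁).card := by rw [Finset.inter_comm]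
  have hDcount : (M₁ ∩ D).card + 1 = (M₂ ∩ D).card := by
    rw [hMD1, hMD2]; omega
  -- split along C
  have hCD : C ⊆ D := hCc.1
  have hspl1 := card_inter_split (C := C) (E := D) M₁ hCD
  have hspl2 := card_inter_split (C := C) (E := D) M₂ hCD
  have hlt' : (M₁ ∩ (D \ C)).card < (M₂ ∩ (D \ C)).card := by omega
  have hE' : Closed D (D \ C) := closed_sdiff ⟨Finset.Subset.refl D, fun f hf g hg ha => hg⟩ hCc
  obtain ⟨C', hC'sub, hC'cl, hC'ne, hC'bal⟩ :=
    exists_pos_comp hw h₁ hs₁ h₂ hs₂ opt₁ opt₂ (D \ C).card (D \ C) le_rfl hE' hlt'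
  -- the union is balanced, closed and nonempty: contradiction
  have hdisj : Disjoint C C' := Finset.disjoint_left.2 fun x hx hy =>
    (Finset.mem_sdiff.1 (hC'sub hy)).2 hx
  have hcl'' : Closed D (C ∪ C') := closed_union hCc hC'cl
  have hsplit : ∀ X : Finset (A × B), (X ∩ (C ∪ C')).card = (X ∩ C).card + (X ∩ C').card := by
    intro X
    rw [Finset.inter_union_distrib_left]
    exact Finset.card_union_of_disjoint (Finset.disjoint_left.2
      fun x hx hy => Finset.disjoint_left.1 hdisj (Finset.mem_inter.1 hx).2
        (Finset.mem_inter.1 hy).2)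
  have hbal : (M₁ ∩ (C ∪ C')).card = (M₂ ∩ (C ∪ C')).card := by
    rw [hsplit M₁, hsplit M₂]; omega
  have := balanced_closed_empty hw h₁ hs₁ h₂ hs₂ opt₁ opt₂ hcl'' hbal
  have : e₀ ∈ (∅ : Finset (A × B)) := this ▸ Finset.mem_union.2 (Or.inl heC)
  exact absurd this (Finset.notMem_empty e₀)

/-- The nesting theorem (deterministic form, for generic weights). -/
theorem nesting {w : A → B → ℝ}
    (hw : ∀ S T : Finset (A × B), weightSum w S = weightSum w T → S = T)
    {A' : Finset A} {B' : Finset B} {M₁ M₂ : Finset (A × B)} {r : ℕ} (hr : 1 ≤ r)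
    (hM₁ : IsMaxMatchingOfSize w A' B' (r - 1) M₁)
    (hM₂ : IsMaxMatchingOfSize w A' B' r M₂) :
    (∀ a, coveredA M₁ a → coveredA M₂ a) ∧ (∀ b, coveredB M₁ b → coveredB M₂ b) := by
  obtain ⟨h₁, hs₁, hc₁, opt₁⟩ := hM₁
  obtain ⟨h₂, hs₂, hc₂, opt₂⟩ := hM₂
  have hcard : M₂.card = M₁.card + 1 := by omega
  have opt₁' : ∀ M', IsMatching M' → M' ⊆ A' ×ˢ B' → M'.card = M₁.card →
      weightSum w M' ≤ weightSum w M₁ := fun M' hm hsub hc => opt₁ M' hm hsub (by omega)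
  have opt₂' : ∀ M', IsMatching M' → M' ⊆ A' ×ˢ B' → M'.card = M₂.card →
      weightSum w M' ≤ weightSum w M₂ := fun M' hm hsub hc => opt₂ M' hm hsub (by omega)
  constructor
  · rintro a ⟨b, hab⟩
    by_contra hcov
    refine nesting_core hw h₁ hs₁ h₂ hs₂ hcard opt₁' opt₂' (e₀ := (a, b)) hab (Or.inl ?_)
    intro e he h
    exact hcov ⟨e.2, by rw [show (a, e.2) = e from Prod.ext h.symm rfl]; exact he⟩
  · rintro b ⟨a, hab⟩
    by_contra hcov
    refine nesting_core hw h₁ hs₁ h₂ hs₂ hcard opt₁' opt₂' (e₀ := (a, b)) hab (Or.inr ?_)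
    intro e he h
    exact hcov ⟨e.1, by rw [show (e.1, b) = e from Prod.ext rfl h.symm]; exact he⟩

end NestingAux
end Part4
section Part5
namespace NestingAux

open MeasureTheory ProbabilityTheory

lemma eq_zero_of_indep {Ω : Type*} [MeasurableSpace Ω] (μ : Measure Ω) [IsProbabilityMeasure μ]
    {X Y : Ω → ℝ} (hX : Measurable X) (hY : Measurable Y)
    (hind : IndepFun Y X μ) (hatom : ∀ x : ℝ, μ.map X {x} = 0) :
    μ {ω | X ω = Y ω} = 0 := by
  have hdiag : MeasurableSet {p : ℝ × ℝ | p.1 = p.2} :=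
    (isClosed_eq continuous_fst continuous_snd).measurableSet
  have hmap : μ.map (fun ω => (Y ω, X ω)) = (μ.map Y).prod (μ.map X) :=
    (indepFun_iff_map_prod_eq_prod_map_map hY.aemeasurable hX.aemeasurable).mp hind
  have hset : {ω | X ω = Y ω} = (fun ω => (Y ω, X ω)) ⁻¹' {p : ℝ × ℝ | p.1 = p.2} := by
    ext ω; simp [eq_comm]
  haveI : IsProbabilityMeasure (μ.map X) := Measure.isProbabilityMeasure_map hX.aemeasurable
  haveI : IsProbabilityMeasure (μ.map Y) := Measure.isProbabilityMeasure_map hY.aemeasurable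
  rw [hset, ← Measure.map_apply (hY.prodMk hX) hdiag, hmap, Measure.prod_apply hdiag]
  have hz : ∀ y : ℝ, (μ.map X) (Prod.mk y ⁻¹' {p : ℝ × ℝ | p.1 = p.2}) = 0 := by
    intro y
    have : (Prod.mk y ⁻¹' {p : ℝ × ℝ | p.1 = p.2}) = {y} := by ext x; simp [eq_comm]
    rw [this]; exact hatom y
  simp [hz, hatom]

variable {A B : Type} [Fintype A] [Fintype B] [DecidableEq A] [DecidableEq B]
variable {Ω : Type} [MeasurableSpace Ω] {μ : Measure Ω} [IsProbabilityMeasure μ]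

lemma sum_eq_sum_null (U : A × B → Ω → ℝ)
    (hmeas : ∀ e, Measurable (U e))
    (hatom : ∀ e (x : ℝ), μ.map (U e) {x} = 0)
    (hindep : iIndepFun U μ)
    (S T : Finset (A × B)) (hdisj : Disjoint S T) (hS : S.Nonempty) :
    μ {ω | (∑ e ∈ S, U e ω) = ∑ e ∈ T, U e ω} = 0 := by
  classical
  obtain ⟨e₀, he₀⟩ := hS
  set c : A × B → ℝ := fun e => if e ∈ T then 1 else if e ∈ S then -1 else 0 with hc
  set g : A × B → ℝ → ℝ := fun e x => if e = e₀ then x else c e * x with hg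
  have hgm : ∀ e, Measurable (g e) := by
    intro e
    by_cases h : e = e₀
    · simp only [hg, if_pos h]; exact measurable_id
    · simp only [hg, if_neg h]; exact measurable_id.const_mul (c e)
  set W : A × B → Ω → ℝ := fun e => g e ∘ U e with hW
  have hWindep : iIndepFun W μ :=
    hindep.comp g hgm
  have hWmeas : ∀ e, Measurable (W e) := fun e => (hgm e).comp (hmeas e)
  have hind : IndepFun (∑ e ∈ Finset.univ.erase e₀, W e) (W e₀) μ :=
    hWindep.indepFun_finsetSum_of_notMem hWmeas (Finset.notMem_erase e₀ Finset.univ)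
  have hWe₀ : W e₀ = U e₀ := by funext ω; simp [hW, hg]
  set Y : Ω → ℝ := ∑ e ∈ Finset.univ.erase e₀, W e with hYdef
  have hYmeas : Measurable Y := by
    rw [hYdef]
    have : (∑ e ∈ Finset.univ.erase e₀, W e) = fun ω => ∑ e ∈ Finset.univ.erase e₀, W e ω := by
      funext ω; rw [Finset.sum_apply]
    rw [this]
    exact Finset.measurable_sum _ fun e _ => hWmeas e
  have he₀T : e₀ ∉ T := Finset.disjoint_left.1 hdisj he₀
  have hY : ∀ ω, Y ω = (∑ e ∈ T, U e ω) - ∑ e ∈ S.erase e₀, U e ω := by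
    intro ω
    rw [hYdef, Finset.sum_apply]
    have hterm : ∀ e ∈ Finset.univ.erase e₀,
        W e ω = (if e ∈ T then U e ω else 0) - (if e ∈ S.erase e₀ then U e ω else 0) := by
      intro e he
      have hne : e ≠ e₀ := (Finset.mem_erase.1 he).1
      by_cases hT : e ∈ T
      · have hSe : e ∉ S := Finset.disjoint_right.1 hdisj hT
        have hSe' : e ∉ S.erase e₀ := fun h => hSe (Finset.mem_of_mem_erase h)
        simp [hW, hg, hc, hne, hT, hSe, hSe']
      · by_cases hSe : e ∈ S
        · have hSe' : e ∈ S.erase e₀ := Finset.mem_erase.2 ⟨hne, hSe⟩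
          simp [hW, hg, hc, hne, hT, hSe, hSe']
        · have hSe' : e ∉ S.erase e₀ := fun h => hSe (Finset.mem_of_mem_erase h)
          simp [hW, hg, hc, hne, hT, hSe, hSe']
    rw [Finset.sum_congr rfl hterm, Finset.sum_sub_distrib]
    congr 1
    · rw [Finset.sum_ite_mem, Finset.inter_eq_right.2]
      intro e he
      exact Finset.mem_erase.2 ⟨fun h => he₀T (h ▸ he), Finset.mem_univ e⟩
    · rw [Finset.sum_ite_mem, Finset.inter_eq_right.2]
      intro e he
      exact Finset.mem_erase.2 ⟨(Finset.mem_erase.1 he).1, Finset.mem_univ e⟩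
  have hevent : {ω | (∑ e ∈ S, U e ω) = ∑ e ∈ T, U e ω} = {ω | U e₀ ω = Y ω} := by
    ext ω
    have hsplit : ∑ e ∈ S.erase e₀, U e ω + U e₀ ω = ∑ e ∈ S, U e ω :=
      Finset.sum_erase_add S _ he₀
    have := hY ω
    simp only [Set.mem_setOf_eq]
    constructor <;> intro h <;> linarith
  rw [hevent]
  rw [hWe₀] at hind
  exact eq_zero_of_indep μ (hmeas e₀) hYmeas hind (hatom e₀)

lemma generic_ae (U : A × B → Ω → ℝ)
    (hmeas : ∀ e, Measurable (U e))
    (hatom : ∀ e (x : ℝ), μ.map (U e) {x} = 0)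
    (hindep : iIndepFun U μ) :
    ∀ᵐ ω ∂μ, ∀ S T : Finset (A × B), S ≠ T → (∑ e ∈ S, U e ω) ≠ ∑ e ∈ T, U e ω := by
  classical
  have key : ∀ S T : Finset (A × B), S ≠ T →
      μ {ω | (∑ e ∈ S, U e ω) = ∑ e ∈ T, U e ω} = 0 := by
    intro S T hST
    have hevent : {ω | (∑ e ∈ S, U e ω) = ∑ e ∈ T, U e ω} =
        {ω | (∑ e ∈ S \ T, U e ω) = ∑ e ∈ T \ S, U e ω} := by
      ext ω
      have h1 := Finset.sum_inter_add_sum_sdiff S T (fun e => U e ω)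
      have h2 := Finset.sum_inter_add_sum_sdiff T S (fun e => U e ω)
      rw [Finset.inter_comm] at h2
      simp only [Set.mem_setOf_eq]
      constructor <;> intro h <;> linarith
    rw [hevent]
    have hdisj : Disjoint (S \ T) (T \ S) := disjoint_sdiff_sdiff
    rcases Finset.eq_empty_or_nonempty (S \ T) with hSe | hSne
    · have hTne : (T \ S).Nonempty := by
        rcases Finset.eq_empty_or_nonempty (T \ S) with hTe | h
        · exact absurd (Finset.Subset.antisymm (Finset.sdiff_eq_empty_iff_subset.1 hSe)
            (Finset.sdiff_eq_empty_iff_subset.1 hTe)) hST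
        · exact h
      have := sum_eq_sum_null U hmeas hatom hindep (T \ S) (S \ T) hdisj.symm hTne
      have hswap : {ω | (∑ e ∈ S \ T, U e ω) = ∑ e ∈ T \ S, U e ω} =
          {ω | (∑ e ∈ T \ S, U e ω) = ∑ e ∈ S \ T, U e ω} := by
        ext ω; simp [eq_comm]
      rw [hswap]
      exact this
    · exact sum_eq_sum_null U hmeas hatom hindep (S \ T) (T \ S) hdisj hSne
  rw [ae_all_iff]
  intro S
  rw [ae_all_iff]
  intro T
  rcases eq_or_ne S T with h | h
  · exact ae_of_all _ fun ω hST => absurd h hST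
  · rw [ae_iff]
    convert key S T h using 2
    ext ω
    simp [h]

end NestingAux
end Part5

open MeasureTheory ProbabilityTheory in

/-- nesting lemma: almost surely, for all induced subgraphs and all
sizes `1 < r ≤ min(|A'|,|B'|)`, every vertex covered by the maximum-weight matching
with `r-1` edges is also covered by the maximum-weight matching with `r` edges. -/
theorem stmt1 {A B : Type} [Fintype A] [Fintype B] [DecidableEq A] [DecidableEq B]
    {Ω : Type} [MeasurableSpace Ω] (μ : Measure Ω) [IsProbabilityMeasure μ]
    (D : Measure ℝ) [IsProbabilityMeasure D]
    (hsupp : D ((Set.Icc (0 : ℝ) 1)ᶜ) = 0)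
    (hatom : ∀ x : ℝ, D {x} = 0)
    (U : A × B → Ω → ℝ)
    (hmeas : ∀ e, Measurable (U e))
    (hdist : ∀ e, μ.map (U e) = D)
    (hindep : iIndepFun U μ) :
    ∀ᵐ ω ∂μ,
      ∀ (A' : Finset A) (B' : Finset B) (r : ℕ), 1 < r → r ≤ min A'.card B'.card →
      ∀ M₁ M₂ : Finset (A × B),
        ClassEF.IsMaxMatchingOfSize (fun a b => U (a, b) ω) A' B' (r - 1) M₁ →
        ClassEF.IsMaxMatchingOfSize (fun a b => U (a, b) ω) A' B' r M₂ →
        (∀ a : A, ClassEF.coveredA M₁ a → ClassEF.coveredA M₂ a) ∧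
        (∀ b : B, ClassEF.coveredB M₁ b → ClassEF.coveredB M₂ b) := by
  have hatom' : ∀ e (x : ℝ), μ.map (U e) {x} = 0 := fun e x => by rw [hdist e]; exact hatom x
  filter_upwards [NestingAux.generic_ae U hmeas hatom' hindep] with ω hω
  intro A' B' r hr hrle M₁ M₂ hM₁ hM₂
  have hw : ∀ S T : Finset (A × B),
      ClassEF.weightSum (fun a b => U (a, b) ω) S =
        ClassEF.weightSum (fun a b => U (a, b) ω) T → S = T := by
    intro S T hST
    by_contra hne
    apply hω S T hne
    have h1 : ∀ M : Finset (A × B),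
        ClassEF.weightSum (fun a b => U (a, b) ω) M = ∑ e ∈ M, U e ω := by
      intro M
      unfold ClassEF.weightSum
      exact Finset.sum_congr rfl fun e _ => by simp
    rw [← h1, ← h1]
    exact hST
  exact NestingAux.nesting hw (by omega) hM₁ hM₂
end

section
/- Let H be a complete bipartite graph with finite parts (A,B) and nonnegative real edge weights such that no two distinct matchings in H have the same total weight. Let A' ⊆ A, B' ⊆ B and 1 < r ≤ min(|A'|,|B'|), and let M^{r−1} and M^{r} be the unique maximum-weight matchings with r−1 and r edges, respectively, in H[A',B']. Then the symmetric difference M^{r−1} Δ M^{r} forms a single path; consequently every vertex covered by M^{r−1} is also covered by M^{r}. -/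
open MeasureTheory ProbabilityTheory Filter
open scoped ENNReal

namespace ClassEF

/-- Degree of a left vertex in a set of edges. -/
def edgeDegA {A B : Type} [DecidableEq A] (S : Finset (A × B)) (a : A) : ℕ :=
  (S.filter fun e => e.1 = a).card

/-- Degree of a right vertex in a set of edges. -/
def edgeDegB {A B : Type} [DecidableEq B] (S : Finset (A × B)) (b : B) : ℕ :=
  (S.filter fun e => e.2 = b).card

/-- A set of edges is connected: any two of its edges are linked by a chain of
edges of `S` successively sharing a vertex. -/
def EdgeConnected {A B : Type} (S : Finset (A × B)) : Prop :=
  ∀ e ∈ S, ∀ e' ∈ S,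
    Relation.ReflTransGen
      (fun f g : A × B => f ∈ S ∧ g ∈ S ∧ (f.1 = g.1 ∨ f.2 = g.2)) e e'

/-- A nonempty set of edges forms a single path: every vertex has degree at most
two, the edge set is connected, and some vertex has degree one. -/
def IsSinglePathEdgeSet {A B : Type} [DecidableEq A] [DecidableEq B]
    (S : Finset (A × B)) : Prop :=
  S.Nonempty ∧ (∀ a : A, edgeDegA S a ≤ 2) ∧ (∀ b : B, edgeDegB S b ≤ 2) ∧
  EdgeConnected S ∧ ((∃ a : A, edgeDegA S a = 1) ∨ (∃ b : B, edgeDegB S b = 1))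


set_option linter.unusedSectionVars false


section ChainAux

variable {α : Type*} [DecidableEq α] (adj : α → α → Prop)

def chainIn (C : Finset α) : ℕ → α → α → Prop
  | 0, f, g => f = g
  | n+1, f, g => ∃ h ∈ C, adj f h ∧ chainIn C n h g

variable {adj}

lemma chainIn_snoc {C : Finset α} {h : α} (hh : h ∈ C) :
    ∀ {n : ℕ} {f g : α}, chainIn adj C n f g → adj g h → chainIn adj C (n+1) f h
  | 0, f, g, hc, ha => by cases hc; exact ⟨h, hh, ha, rfl⟩
  | n+1, f, g, hc, ha => by
      obtain ⟨x, hx, hfx, hc'⟩ := hc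
      exact ⟨x, hx, hfx, chainIn_snoc hh hc' ha⟩

lemma chainIn_unsnoc {C : Finset α} :
    ∀ {n : ℕ} {f g : α}, f ∈ C → chainIn adj C (n+1) f g →
      ∃ h ∈ C, chainIn adj C n f h ∧ adj h g
  | 0, f, g, hf, hc => by
      obtain ⟨x, hx, hfx, hc⟩ := hc
      cases hc
      exact ⟨f, hf, rfl, hfx⟩
  | n+1, f, g, hf, hc => by
      obtain ⟨x, hx, hfx, hc⟩ := hc
      obtain ⟨h, hh, hch, ha⟩ := chainIn_unsnoc hx hc
      exact ⟨h, hh, ⟨x, hx, hfx, hch⟩, ha⟩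

lemma conn_pairs (hsym : ∀ a b, adj a b → adj b a) [DecidableRel adj] :
    ∀ C : Finset α, ∀ e ∈ C, (∀ f ∈ C, ∃ n, chainIn adj C n e f) →
      2 * C.card ≤ ((C ×ˢ C).filter fun p => adj p.1 p.2).card + 2 := by
  intro C
  induction C using Finset.strongInduction with
  | _ C ih =>
    intro e he hconn
    rcases le_or_gt C.card 1 with h1 | h1
    · have hc1 : C.card = 1 := le_antisymm h1 (Finset.card_pos.mpr ⟨e, he⟩)
      rw [hc1]
      omega
    · -- distance function
      set d : α → ℕ := fun g => sInf {n | chainIn adj C n e g} with hd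
      have hne : ∀ g ∈ C, {n | chainIn adj C n e g}.Nonempty := fun g hg => hconn g hg
      have hdmem : ∀ g ∈ C, chainIn adj C (d g) e g := fun g hg => Nat.sInf_mem (hne g hg)
      have hdle : ∀ {g : α} {n : ℕ}, chainIn adj C n e g → d g ≤ n := fun hc => Nat.sInf_le hc
      obtain ⟨f, hf, hmax⟩ := Finset.exists_max_image C d ⟨e, he⟩
      obtain ⟨g0, hg0, hg0ne⟩ := Finset.exists_mem_ne h1 e
      have hdg0 : 1 ≤ d g0 := by
        rcases Nat.eq_zero_or_pos (d g0) with h0 | h0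
        · have := hdmem g0 hg0; rw [h0] at this; exact absurd this.symm hg0ne
        · exact h0
      have hdf1 : 1 ≤ d f := le_trans hdg0 (hmax g0 hg0)
      have hfe : f ≠ e := by
        intro h; subst h
        have : d f ≤ 0 := hdle (show chainIn adj C 0 f f from rfl)
        omega
      obtain ⟨k, hk⟩ : ∃ k, d f = k + 1 := ⟨d f - 1, by omega⟩
      have hcf : chainIn adj C (k+1) e f := by have := hdmem f hf; rwa [hk] at this
      obtain ⟨h0, hh0, hch0, hah0⟩ := chainIn_unsnoc he hcf
      have hh0f : h0 ≠ f := by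
        intro h; subst h
        have : d h0 ≤ k := hdle hch0
        omega
      set C' := C.erase f with hC'
      have heC' : e ∈ C' := Finset.mem_erase.mpr ⟨hfe.symm, he⟩
      have hconn' : ∀ g ∈ C', ∃ n, chainIn adj C' n e g := by
        have key : ∀ m : ℕ, ∀ g ∈ C, g ≠ f → d g ≤ m → ∃ n, chainIn adj C' n e g := by
          intro m
          induction m with
          | zero =>
            intro g hg hgf hdg
            have := hdmem g hg
            rw [Nat.le_zero.mp hdg] at this
            cases this
            exact ⟨0, rfl⟩
          | succ m ihm =>
            intro g hg hgf hdg
            rcases Nat.lt_or_ge (d g) (m+1) with hlt | hge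
            · exact ihm g hg hgf (Nat.lt_succ_iff.mp hlt)
            · have heq : d g = m + 1 := le_antisymm hdg hge
              have hcg : chainIn adj C (m+1) e g := by have := hdmem g hg; rwa [heq] at this
              obtain ⟨h, hh, hch, ha⟩ := chainIn_unsnoc he hcg
              have hdh : d h ≤ m := hdle hch
              have hhf : h ≠ f := by
                intro heq'; subst heq'
                have : d g ≤ d h := hmax g hg  -- wrong direction? d g ≤ d f = d h
                omega
              obtain ⟨n', hc'⟩ := ihm h hh hhf hdh
              exact ⟨n' + 1, chainIn_snoc (Finset.mem_erase.mpr ⟨hgf, hg⟩) hc' ha⟩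
        intro g hg
        exact key (d g) g (Finset.mem_of_mem_erase hg) (Finset.ne_of_mem_erase hg) le_rfl
      have hss : C' ⊂ C := Finset.erase_ssubset hf
      have ihC' := ih C' hss e heC' hconn'
      -- counting
      set S := (C ×ˢ C).filter fun p => adj p.1 p.2 with hS
      set S' := (C' ×ˢ C').filter fun p => adj p.1 p.2 with hS'
      have hS'S : S' ⊆ S :=
        Finset.filter_subset_filter _ (Finset.product_subset_product (Finset.erase_subset _ _) (Finset.erase_subset _ _))
      have hh0C' : h0 ∈ C' := Finset.mem_erase.mpr ⟨hh0f, hh0⟩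
      have hp1 : (f, h0) ∈ S := Finset.mem_filter.mpr ⟨Finset.mem_product.mpr ⟨hf, hh0⟩, hsym _ _ hah0⟩
      have hp2 : (h0, f) ∈ S := Finset.mem_filter.mpr ⟨Finset.mem_product.mpr ⟨hh0, hf⟩, hah0⟩
      have hp1' : (f, h0) ∉ S' := by
        intro h
        have := (Finset.mem_product.mp (Finset.mem_filter.mp h).1).1
        exact (Finset.ne_of_mem_erase this) rfl
      have hp2' : (h0, f) ∉ S' := by
        intro h
        have := (Finset.mem_product.mp (Finset.mem_filter.mp h).1).2
        exact (Finset.ne_of_mem_erase this) rfl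
      have hne12 : (f, h0) ≠ (h0, f) := by
        intro h
        exact hh0f (congrArg Prod.fst h).symm
      have hsub : insert (f, h0) (insert (h0, f) S') ⊆ S := by
        intro p hp
        rcases Finset.mem_insert.mp hp with h | hp
        · subst h; exact hp1
        rcases Finset.mem_insert.mp hp with h | hp
        · subst h; exact hp2
        · exact hS'S hp
      have hcardins : (insert (f, h0) (insert (h0, f) S')).card = S'.card + 2 := by
        rw [Finset.card_insert_of_notMem (by
          intro h
          rcases Finset.mem_insert.mp h with h | h
          · exact hne12 h
          · exact hp1' h), Finset.card_insert_of_notMem hp2']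
      have hcle := Finset.card_le_card hsub
      have hCC' : C'.card + 1 = C.card := Finset.card_erase_add_one hf
      omega

end ChainAux




section Bip

variable {A B : Type*} [DecidableEq A] [DecidableEq B]

def bAdj (f g : A × B) : Prop := f ≠ g ∧ (f.1 = g.1 ∨ f.2 = g.2)

instance : DecidableRel (@bAdj A B) := fun f g => by unfold bAdj; infer_instance

lemma bAdj_symm : ∀ f g : A × B, bAdj f g → bAdj g f := by
  rintro f g ⟨h1, h2⟩
  exact ⟨h1.symm, h2.imp Eq.symm Eq.symm⟩

variable {M₁ M₂ : Finset (A × B)}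

/-- A neighbour (in the symmetric difference) of an `M₁`-edge lies in `M₂`. -/
lemma nbr_mem_M₂ (hm1 : IsMatching M₁) {C : Finset (A × B)}
    (hC : C ⊆ (M₁ \ M₂) ∪ (M₂ \ M₁)) {g h : A × B} (hg : g ∈ M₁)
    (hh : h ∈ C) (ha : bAdj g h) : h ∈ M₂ ∧ h ∉ M₁ := by
  have hh' := hC hh
  rcases Finset.mem_union.mp hh' with h' | h'
  · exfalso
    have hhm1 := (Finset.mem_sdiff.mp h').1
    rcases ha.2 with h2 | h2
    · exact ha.1 (hm1.1 g hg h hhm1 h2)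
    · exact ha.1 (hm1.2 g hg h hhm1 h2)
  · exact ⟨(Finset.mem_sdiff.mp h').1, (Finset.mem_sdiff.mp h').2⟩

lemma Tcard_le (hm1 : IsMatching M₁) (hm2 : IsMatching M₂) {C : Finset (A × B)}
    (hC : C ⊆ (M₁ \ M₂) ∪ (M₂ \ M₁)) {g : A × B} (hg : g ∈ M₁) :
    (C.filter fun h => bAdj g h).card ≤ 2 := by
  set T := C.filter fun h => bAdj g h with hT
  have hsplit : T ⊆ (T.filter fun h => h.1 = g.1) ∪ (T.filter fun h => h.2 = g.2) := by
    intro h hh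
    have := (Finset.mem_filter.mp hh).2.2
    rcases this with h1 | h1
    · exact Finset.mem_union_left _ (Finset.mem_filter.mpr ⟨hh, h1.symm⟩)
    · exact Finset.mem_union_right _ (Finset.mem_filter.mpr ⟨hh, h1.symm⟩)
  have h1 : (T.filter fun h => h.1 = g.1).card ≤ 1 := by
    apply Finset.card_le_one.mpr
    intro a ha b hb
    obtain ⟨haT, ha1⟩ := Finset.mem_filter.mp ha
    obtain ⟨hbT, hb1⟩ := Finset.mem_filter.mp hb
    obtain ⟨haC, haA⟩ := Finset.mem_filter.mp haT
    obtain ⟨hbC, hbA⟩ := Finset.mem_filter.mp hbT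
    have ha2 := (nbr_mem_M₂ hm1 hC hg haC haA).1
    have hb2 := (nbr_mem_M₂ hm1 hC hg hbC hbA).1
    exact hm2.1 a ha2 b hb2 (ha1.trans hb1.symm)
  have h2 : (T.filter fun h => h.2 = g.2).card ≤ 1 := by
    apply Finset.card_le_one.mpr
    intro a ha b hb
    obtain ⟨haT, ha1⟩ := Finset.mem_filter.mp ha
    obtain ⟨hbT, hb1⟩ := Finset.mem_filter.mp hb
    obtain ⟨haC, haA⟩ := Finset.mem_filter.mp haT
    obtain ⟨hbC, hbA⟩ := Finset.mem_filter.mp hbT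
    have ha2 := (nbr_mem_M₂ hm1 hC hg haC haA).1
    have hb2 := (nbr_mem_M₂ hm1 hC hg hbC hbA).1
    exact hm2.2 a ha2 b hb2 (ha1.trans hb1.symm)
  calc T.card ≤ _ := Finset.card_le_card hsplit
    _ ≤ _ := Finset.card_union_le _ _
    _ ≤ 2 := by omega

lemma Tcard_le_one (hm1 : IsMatching M₁) (hm2 : IsMatching M₂) {C : Finset (A × B)}
    (hC : C ⊆ (M₁ \ M₂) ∪ (M₂ \ M₁)) {g : A × B} (hg : g ∈ M₁)
    (hfree : (∀ h ∈ M₂, h.1 ≠ g.1) ∨ (∀ h ∈ M₂, h.2 ≠ g.2)) :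
    (C.filter fun h => bAdj g h).card ≤ 1 := by
  set T := C.filter fun h => bAdj g h with hT
  rcases hfree with hfree | hfree
  · have hsub : T ⊆ T.filter fun h => h.2 = g.2 := by
      intro h hh
      obtain ⟨hhC, hhA⟩ := Finset.mem_filter.mp hh
      rcases hhA.2 with h1 | h1
      · exact absurd h1.symm (hfree h (nbr_mem_M₂ hm1 hC hg hhC hhA).1)
      · exact Finset.mem_filter.mpr ⟨hh, h1.symm⟩
    refine le_trans (Finset.card_le_card hsub) (Finset.card_le_one.mpr ?_)
    intro a ha b hb
    obtain ⟨haT, ha1⟩ := Finset.mem_filter.mp ha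
    obtain ⟨hbT, hb1⟩ := Finset.mem_filter.mp hb
    obtain ⟨haC, haA⟩ := Finset.mem_filter.mp haT
    obtain ⟨hbC, hbA⟩ := Finset.mem_filter.mp hbT
    exact hm2.2 a (nbr_mem_M₂ hm1 hC hg haC haA).1 b (nbr_mem_M₂ hm1 hC hg hbC hbA).1
      (ha1.trans hb1.symm)
  · have hsub : T ⊆ T.filter fun h => h.1 = g.1 := by
      intro h hh
      obtain ⟨hhC, hhA⟩ := Finset.mem_filter.mp hh
      rcases hhA.2 with h1 | h1
      · exact Finset.mem_filter.mpr ⟨hh, h1.symm⟩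
      · exact absurd h1.symm (hfree h (nbr_mem_M₂ hm1 hC hg hhC hhA).1)
    refine le_trans (Finset.card_le_card hsub) (Finset.card_le_one.mpr ?_)
    intro a ha b hb
    obtain ⟨haT, ha1⟩ := Finset.mem_filter.mp ha
    obtain ⟨hbT, hb1⟩ := Finset.mem_filter.mp hb
    obtain ⟨haC, haA⟩ := Finset.mem_filter.mp haT
    obtain ⟨hbC, hbA⟩ := Finset.mem_filter.mp hbT
    exact hm2.1 a (nbr_mem_M₂ hm1 hC hg haC haA).1 b (nbr_mem_M₂ hm1 hC hg hbC hbA).1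
      (ha1.trans hb1.symm)

lemma pairs_card (hm1 : IsMatching M₁) (hm2 : IsMatching M₂) (C : Finset (A × B))
    (hC : C ⊆ (M₁ \ M₂) ∪ (M₂ \ M₁)) :
    ((C ×ˢ C).filter fun p => bAdj p.1 p.2).card
      = 2 * ∑ g ∈ C.filter (· ∈ M₁), (C.filter fun h => bAdj g h).card := by
  classical
  set S := (C ×ˢ C).filter fun p => bAdj p.1 p.2 with hS
  set SP := S.filter (fun p => p.1 ∈ M₁) with hSP
  set SQ := S.filter (fun p => ¬ p.1 ∈ M₁) with hSQ
  have hmemS : ∀ p ∈ S, p.1 ∈ C ∧ p.2 ∈ C ∧ bAdj p.1 p.2 := by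
    intro p hp
    obtain ⟨hp1, hp2⟩ := Finset.mem_filter.mp hp
    obtain ⟨h1, h2⟩ := Finset.mem_product.mp hp1
    exact ⟨h1, h2, hp2⟩
  have hkey : ∀ p ∈ S, p.1 ∈ M₁ → p.2 ∉ M₁ := by
    intro p hp h1
    obtain ⟨hc1, hc2, ha⟩ := hmemS p hp
    exact (nbr_mem_M₂ hm1 hC h1 hc2 ha).2
  have hkey2 : ∀ p ∈ S, p.1 ∉ M₁ → p.2 ∈ M₁ := by
    intro p hp h1
    obtain ⟨hc1, hc2, ha⟩ := hmemS p hp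
    by_contra h2
    have hq1 : p.1 ∈ M₂ := by
      rcases Finset.mem_union.mp (hC hc1) with h' | h'
      · exact absurd (Finset.mem_sdiff.mp h').1 h1
      · exact (Finset.mem_sdiff.mp h').1
    have hq2 : p.2 ∈ M₂ := by
      rcases Finset.mem_union.mp (hC hc2) with h' | h'
      · exact absurd (Finset.mem_sdiff.mp h').1 h2
      · exact (Finset.mem_sdiff.mp h').1
    rcases ha.2 with h' | h'
    · exact ha.1 (hm2.1 _ hq1 _ hq2 h')
    · exact ha.1 (hm2.2 _ hq1 _ hq2 h')
  have hsplit : SP.card + SQ.card = S.card :=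
    Finset.card_filter_add_card_filter_not (p := fun p : (A × B) × (A × B) => p.1 ∈ M₁)
  have hswap : SQ.card = SP.card := by
    refine Finset.card_bij' (fun p _ => (p.2, p.1)) (fun p _ => (p.2, p.1)) ?hi ?hj ?li ?ri
    case hi =>
      intro p hp
      obtain ⟨hpS, hp1⟩ := Finset.mem_filter.mp hp
      obtain ⟨hc1, hc2, ha⟩ := hmemS p hpS
      exact Finset.mem_filter.mpr ⟨Finset.mem_filter.mpr
        ⟨Finset.mem_product.mpr ⟨hc2, hc1⟩, bAdj_symm _ _ ha⟩, hkey2 p hpS hp1⟩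
    case hj =>
      intro p hp
      obtain ⟨hpS, hp1⟩ := Finset.mem_filter.mp hp
      obtain ⟨hc1, hc2, ha⟩ := hmemS p hpS
      exact Finset.mem_filter.mpr ⟨Finset.mem_filter.mpr
        ⟨Finset.mem_product.mpr ⟨hc2, hc1⟩, bAdj_symm _ _ ha⟩, hkey p hpS hp1⟩
    case li => intro p _; rfl
    case ri => intro p _; rfl
  have hfiber : SP.card = ∑ g ∈ C.filter (· ∈ M₁), (C.filter fun h => bAdj g h).card := by
    rw [Finset.card_eq_sum_card_fiberwise (f := Prod.fst) (t := C.filter (· ∈ M₁)) ?hmap]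
    case hmap =>
      intro p hp
      obtain ⟨hpS, hp1⟩ := Finset.mem_filter.mp hp
      exact Finset.mem_filter.mpr ⟨(hmemS p hpS).1, hp1⟩
    refine Finset.sum_congr rfl ?_
    intro g hg
    obtain ⟨hgC, hgM⟩ := Finset.mem_filter.mp hg
    refine Finset.card_bij' (fun p _ => p.2) (fun h _ => (g, h)) ?hi ?hj ?li ?ri
    case hi =>
      intro p hp
      obtain ⟨hpSP, hp1⟩ := Finset.mem_filter.mp hp
      obtain ⟨hpS, _⟩ := Finset.mem_filter.mp hpSP
      obtain ⟨hc1, hc2, ha⟩ := hmemS p hpS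
      exact Finset.mem_filter.mpr ⟨hc2, hp1 ▸ ha⟩
    case hj =>
      intro h hh
      obtain ⟨hhC, hha⟩ := Finset.mem_filter.mp hh
      refine Finset.mem_filter.mpr ⟨Finset.mem_filter.mpr ⟨Finset.mem_filter.mpr
        ⟨Finset.mem_product.mpr ⟨hgC, hhC⟩, hha⟩, hgM⟩, rfl⟩
    case li =>
      intro p hp
      obtain ⟨hpSP, hp1⟩ := Finset.mem_filter.mp hp
      exact Prod.ext hp1.symm rfl
    case ri => intro h _; rfl
  omega

end Bip




section Swap

variable {A B : Type*} [DecidableEq A] [DecidableEq B] {M₁ M₂ : Finset (A × B)}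

lemma swap_matching (hm1 : IsMatching M₁) (hm2 : IsMatching M₂)
    {C : Finset (A × B)} (hCD : C ⊆ (M₁ \ M₂) ∪ (M₂ \ M₁))
    (hclosed : ∀ f ∈ C, ∀ g ∈ (M₁ \ M₂) ∪ (M₂ \ M₁), (f.1 = g.1 ∨ f.2 = g.2) → g ∈ C) :
    IsMatching ((M₁ \ C) ∪ (C ∩ M₂)) := by
  have key : ∀ e ∈ M₁ \ C, ∀ e' ∈ C ∩ M₂, (e.1 = e'.1 ∨ e.2 = e'.2) → False := by
    intro e he e' he' hco
    obtain ⟨heM, heC⟩ := Finset.mem_sdiff.mp he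
    obtain ⟨he'C, he'M⟩ := Finset.mem_inter.mp he'
    by_cases heM2 : e ∈ M₂
    · apply heC
      have : e' = e := by
        rcases hco with h | h
        · exact hm2.1 e' he'M e heM2 h.symm
        · exact hm2.2 e' he'M e heM2 h.symm
      rwa [← this]
    · exact heC (hclosed e' he'C e (Finset.mem_union_left _ (Finset.mem_sdiff.mpr ⟨heM, heM2⟩))
        (hco.imp Eq.symm Eq.symm))
  constructor
  · intro e he e' he' hco
    rcases Finset.mem_union.mp he with h | h <;> rcases Finset.mem_union.mp he' with h' | h'
    · exact hm1.1 e (Finset.mem_sdiff.mp h).1 e' (Finset.mem_sdiff.mp h').1 hco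
    · exact absurd (key e h e' h' (Or.inl hco)) (not_false)
    · exact absurd (key e' h' e h (Or.inl hco.symm)) (not_false)
    · exact hm2.1 e (Finset.mem_inter.mp h).2 e' (Finset.mem_inter.mp h').2 hco
  · intro e he e' he' hco
    rcases Finset.mem_union.mp he with h | h <;> rcases Finset.mem_union.mp he' with h' | h'
    · exact hm1.2 e (Finset.mem_sdiff.mp h).1 e' (Finset.mem_sdiff.mp h').1 hco
    · exact absurd (key e h e' h' (Or.inr hco)) (not_false)
    · exact absurd (key e' h' e h (Or.inr hco.symm)) (not_false)
    · exact hm2.2 e (Finset.mem_inter.mp h).2 e' (Finset.mem_inter.mp h').2 hco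

lemma swap_card {C : Finset (A × B)} :
    ((M₁ \ C) ∪ (C ∩ M₂)).card + (C ∩ M₁).card = M₁.card + (C ∩ M₂).card := by
  have hdisj : Disjoint (M₁ \ C) (C ∩ M₂) := by
    rw [Finset.disjoint_left]
    intro e he he'
    obtain ⟨heM, heC⟩ := Finset.mem_sdiff.mp he
    exact heC (Finset.mem_inter.mp he').1
  have h1 : M₁ \ C = M₁ \ (C ∩ M₁) := by
    ext e
    simp only [Finset.mem_sdiff, Finset.mem_inter]
    tauto
  rw [Finset.card_union_of_disjoint hdisj, h1,
    Finset.card_sdiff_of_subset (Finset.inter_subset_right)]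
  have := Finset.card_le_card (Finset.inter_subset_right (s₁ := C) (s₂ := M₁))
  omega

lemma swap_weight (w : A → B → ℝ) {C : Finset (A × B)} :
    (∑ e ∈ (M₁ \ C) ∪ (C ∩ M₂), w e.1 e.2)
      = (∑ e ∈ M₁, w e.1 e.2) - (∑ e ∈ C ∩ M₁, w e.1 e.2) + (∑ e ∈ C ∩ M₂, w e.1 e.2) := by
  have hdisj : Disjoint (M₁ \ C) (C ∩ M₂) := by
    rw [Finset.disjoint_left]
    intro e he he'
    exact (Finset.mem_sdiff.mp he).2 (Finset.mem_inter.mp he').1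
  have h1 : M₁ \ C = M₁ \ (C ∩ M₁) := by
    ext e
    simp only [Finset.mem_sdiff, Finset.mem_inter]
    tauto
  rw [Finset.sum_union hdisj, h1, Finset.sum_sdiff_eq_sub (Finset.inter_subset_right)]

end Swap


/-- if no two distinct matchings have the same total weight, then the
symmetric difference of the maximum-weight matchings with `r-1` and `r` edges in an
induced subgraph is a single path; consequently every vertex covered by the smaller
matching is covered by the larger one. -/
theorem stmt2 {A B : Type} [Fintype A] [Fintype B] [DecidableEq A] [DecidableEq B]
    (w : A → B → ℝ) (hw : ∀ a b, 0 ≤ w a b)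
    (hdistinct : ∀ M₁ M₂ : Finset (A × B), IsMatching M₁ → IsMatching M₂ → M₁ ≠ M₂ →
      weightSum w M₁ ≠ weightSum w M₂)
    (A' : Finset A) (B' : Finset B) (r : ℕ) (hr1 : 1 < r)
    (hr2 : r ≤ min A'.card B'.card)
    (M₁ M₂ : Finset (A × B))
    (hM₁ : IsMaxMatchingOfSize w A' B' (r - 1) M₁)
    (hM₂ : IsMaxMatchingOfSize w A' B' r M₂) :
    IsSinglePathEdgeSet ((M₁ \ M₂) ∪ (M₂ \ M₁)) ∧
    (∀ a : A, coveredA M₁ a → coveredA M₂ a) ∧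
    (∀ b : B, coveredB M₁ b → coveredB M₂ b) := by
  classical
  obtain ⟨hm1, hsub1, hcard1, hmax1⟩ := hM₁
  obtain ⟨hm2, hsub2, hcard2, hmax2⟩ := hM₂
  set D := (M₁ \ M₂) ∪ (M₂ \ M₁) with hD
  have hDsubset : D ⊆ (M₁ \ M₂) ∪ (M₂ \ M₁) := subset_rfl
  have hPQ : (M₂ \ M₁).card = (M₁ \ M₂).card + 1 := by
    have h1 : (M₁ \ M₂).card + (M₁ ∩ M₂).card = M₁.card :=
      Finset.card_sdiff_add_card_inter M₁ M₂
    have h2 : (M₂ \ M₁).card + (M₂ ∩ M₁).card = M₂.card :=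
      Finset.card_sdiff_add_card_inter M₂ M₁
    rw [Finset.inter_comm] at h2
    omega
  set R : (A × B) → (A × B) → Prop :=
    fun f g => f ∈ D ∧ g ∈ D ∧ (f.1 = g.1 ∨ f.2 = g.2) with hR
  have hRsymm : Symmetric R := by
    rintro f g ⟨h1, h2, h3⟩
    exact ⟨h2, h1, h3.imp Eq.symm Eq.symm⟩
  set comp : (A × B) → Finset (A × B) :=
    fun e => D.filter (fun f => Relation.ReflTransGen R e f) with hcomp
  have hcompD : ∀ e, comp e ⊆ D := fun e => Finset.filter_subset _ _
  have hmemcomp : ∀ e ∈ D, e ∈ comp e := fun e he =>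
    Finset.mem_filter.mpr ⟨he, Relation.ReflTransGen.refl⟩
  have hclosed : ∀ e, ∀ f ∈ comp e, ∀ g ∈ D, (f.1 = g.1 ∨ f.2 = g.2) → g ∈ comp e := by
    intro e f hf g hg hco
    obtain ⟨hfD, hreach⟩ := Finset.mem_filter.mp hf
    exact Finset.mem_filter.mpr ⟨hg, hreach.tail ⟨hfD, hg, hco⟩⟩
  have hconn : ∀ e ∈ D, ∀ f ∈ comp e, ∃ n, chainIn bAdj (comp e) n e f := by
    intro e he f hf
    obtain ⟨hfD, hreach⟩ := Finset.mem_filter.mp hf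
    clear hf hfD
    induction hreach with
    | refl => exact ⟨0, rfl⟩
    | @tail b c hab hbc ihab =>
      obtain ⟨hbD, hcD, hco⟩ := hbc
      have hccomp : c ∈ comp e :=
        Finset.mem_filter.mpr ⟨hcD, hab.tail ⟨hbD, hcD, hco⟩⟩
      obtain ⟨n, hn⟩ := ihab
      by_cases hbc' : b = c
      · subst hbc'; exact ⟨n, hn⟩
      · exact ⟨n + 1, chainIn_snoc hccomp hn ⟨hbc', hco⟩⟩
  have hsplitcard : ∀ e : A × B,
      ((comp e).filter (· ∈ M₁)).card + ((comp e).filter (¬ · ∈ M₁)).card = (comp e).card :=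
    fun e => Finset.card_filter_add_card_filter_not (p := (· ∈ M₁))
  have hbound : ∀ e ∈ D,
      ((comp e).filter (¬ · ∈ M₁)).card ≤ ((comp e).filter (· ∈ M₁)).card + 1 := by
    intro e he
    have h1 := conn_pairs bAdj_symm (comp e) e (hmemcomp e he) (hconn e he)
    have h2 := pairs_card hm1 hm2 (comp e) (hcompD e)
    have h3 : ∑ g ∈ (comp e).filter (· ∈ M₁), ((comp e).filter fun h => bAdj g h).card
        ≤ ((comp e).filter (· ∈ M₁)).card * 2 := by
      have := Finset.sum_le_card_nsmul ((comp e).filter (· ∈ M₁))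
        (fun g => ((comp e).filter fun h => bAdj g h).card) 2
        (fun g hg => Tcard_le hm1 hm2 (hcompD e) (Finset.mem_filter.mp hg).2)
      simpa [smul_eq_mul] using this
    have h4 := hsplitcard e
    omega
  have hex : ∃ e ∈ D,
      ((comp e).filter (¬ · ∈ M₁)).card = ((comp e).filter (· ∈ M₁)).card + 1 := by
    by_contra hno
    push_neg at hno
    have hle : ∀ e ∈ D,
        ((comp e).filter (¬ · ∈ M₁)).card ≤ ((comp e).filter (· ∈ M₁)).card := by
      intro e he
      have := hbound e he
      have := hno e he
      omega
    set comps := D.image comp with hcomps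
    have hdisj : ∀ C1 ∈ comps, ∀ C2 ∈ comps, C1 ≠ C2 → Disjoint C1 C2 := by
      intro C1 h1 C2 h2 hne
      obtain ⟨e1, he1, rfl⟩ := Finset.mem_image.mp h1
      obtain ⟨e2, he2, rfl⟩ := Finset.mem_image.mp h2
      rw [Finset.disjoint_left]
      intro f hf1 hf2
      apply hne
      obtain ⟨hfD, hr1⟩ := Finset.mem_filter.mp hf1
      obtain ⟨_, hr2⟩ := Finset.mem_filter.mp hf2
      ext g
      simp only [hcomp, Finset.mem_filter]
      constructor
      · rintro ⟨hgD, hr⟩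
        exact ⟨hgD, hr2.trans (((@Relation.ReflTransGen.stdSymm _ R ⟨fun a b h => hRsymm h⟩).symm _ _ hr1).trans hr)⟩
      · rintro ⟨hgD, hr⟩
        exact ⟨hgD, hr1.trans (((@Relation.ReflTransGen.stdSymm _ R ⟨fun a b h => hRsymm h⟩).symm _ _ hr2).trans hr)⟩
    have hQ : M₂ \ M₁ = comps.biUnion (fun C => C.filter (¬ · ∈ M₁)) := by
      ext q
      simp only [Finset.mem_biUnion]
      constructor
      · intro hq
        have hqD : q ∈ D := Finset.mem_union_right _ hq
        exact ⟨comp q, Finset.mem_image_of_mem comp hqD,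
          Finset.mem_filter.mpr ⟨hmemcomp q hqD, (Finset.mem_sdiff.mp hq).2⟩⟩
      · rintro ⟨C, hC, hq⟩
        obtain ⟨e, he, rfl⟩ := Finset.mem_image.mp hC
        obtain ⟨hqC, hqM⟩ := Finset.mem_filter.mp hq
        rcases Finset.mem_union.mp (hcompD e hqC) with h | h
        · exact absurd (Finset.mem_sdiff.mp h).1 hqM
        · exact h
    have hP : comps.biUnion (fun C => C.filter (· ∈ M₁)) ⊆ M₁ \ M₂ := by
      intro q hq
      obtain ⟨C, hC, hq⟩ := Finset.mem_biUnion.mp hq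
      obtain ⟨e, he, rfl⟩ := Finset.mem_image.mp hC
      obtain ⟨hqC, hqM⟩ := Finset.mem_filter.mp hq
      rcases Finset.mem_union.mp (hcompD e hqC) with h | h
      · exact h
      · exact absurd hqM (Finset.mem_sdiff.mp h).2
    have hQc : (M₂ \ M₁).card = ∑ C ∈ comps, (C.filter (¬ · ∈ M₁)).card := by
      rw [hQ]
      exact Finset.card_biUnion
        (fun C1 h1 C2 h2 hne => Finset.disjoint_filter_filter (hdisj C1 h1 C2 h2 hne))
    have hPc : ∑ C ∈ comps, (C.filter (· ∈ M₁)).card ≤ (M₁ \ M₂).card := by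
      rw [← Finset.card_biUnion
        (fun C1 h1 C2 h2 hne => Finset.disjoint_filter_filter (hdisj C1 h1 C2 h2 hne))]
      exact Finset.card_le_card hP
    have hsum : ∑ C ∈ comps, (C.filter (¬ · ∈ M₁)).card
        ≤ ∑ C ∈ comps, (C.filter (· ∈ M₁)).card := by
      apply Finset.sum_le_sum
      intro C hC
      obtain ⟨e, he, rfl⟩ := Finset.mem_image.mp hC
      exact hle e he
    omega
  obtain ⟨e, heD, hde⟩ := hex
  have hCD : comp e ⊆ D := hcompD e
  have hQfilter : (comp e).filter (¬ · ∈ M₁) = comp e ∩ M₂ := by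
    ext f
    simp only [Finset.mem_filter, Finset.mem_inter]
    constructor
    · rintro ⟨hf, hfn⟩
      refine ⟨hf, ?_⟩
      rcases Finset.mem_union.mp (hCD hf) with h | h
      · exact absurd (Finset.mem_sdiff.mp h).1 hfn
      · exact (Finset.mem_sdiff.mp h).1
    · rintro ⟨hf, hf2⟩
      refine ⟨hf, fun hf1 => ?_⟩
      rcases Finset.mem_union.mp (hCD hf) with h | h
      · exact (Finset.mem_sdiff.mp h).2 hf2
      · exact (Finset.mem_sdiff.mp h).2 hf1
  have hPfilter : (comp e).filter (· ∈ M₁) = comp e ∩ M₁ := by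
    ext f
    simp only [Finset.mem_filter, Finset.mem_inter]
  have hcCC : (comp e ∩ M₂).card = (comp e ∩ M₁).card + 1 := by
    rw [← hQfilter, ← hPfilter]
    exact hde
  have hN₁m : IsMatching ((M₁ \ comp e) ∪ (comp e ∩ M₂)) :=
    swap_matching hm1 hm2 hCD (hclosed e)
  have hCD2 : comp e ⊆ (M₂ \ M₁) ∪ (M₁ \ M₂) := by
    rw [Finset.union_comm]; exact hCD
  have hclosed2 : ∀ f ∈ comp e, ∀ g ∈ (M₂ \ M₁) ∪ (M₁ \ M₂),
      (f.1 = g.1 ∨ f.2 = g.2) → g ∈ comp e := by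
    intro f hf g hg hco
    exact hclosed e f hf g (by rwa [Finset.union_comm] at hg) hco
  have hN₂m : IsMatching ((M₂ \ comp e) ∪ (comp e ∩ M₁)) :=
    swap_matching hm2 hm1 hCD2 hclosed2
  have hc1 := swap_card (M₁ := M₁) (M₂ := M₂) (C := comp e)
  have hc2 := swap_card (M₁ := M₂) (M₂ := M₁) (C := comp e)
  have hN₁card : ((M₁ \ comp e) ∪ (comp e ∩ M₂)).card = r := by omega
  have hN₂card : ((M₂ \ comp e) ∪ (comp e ∩ M₁)).card = r - 1 := by omega
  have hN₁sub : (M₁ \ comp e) ∪ (comp e ∩ M₂) ⊆ A' ×ˢ B' := by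
    intro f hf
    rcases Finset.mem_union.mp hf with h | h
    · exact hsub1 (Finset.mem_sdiff.mp h).1
    · exact hsub2 (Finset.mem_inter.mp h).2
  have hN₂sub : (M₂ \ comp e) ∪ (comp e ∩ M₁) ⊆ A' ×ˢ B' := by
    intro f hf
    rcases Finset.mem_union.mp hf with h | h
    · exact hsub2 (Finset.mem_sdiff.mp h).1
    · exact hsub1 (Finset.mem_inter.mp h).2
  have hle1 : weightSum w ((M₁ \ comp e) ∪ (comp e ∩ M₂)) ≤ weightSum w M₂ :=
    hmax2 _ hN₁m hN₁sub hN₁card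
  have hle2 : weightSum w ((M₂ \ comp e) ∪ (comp e ∩ M₁)) ≤ weightSum w M₁ :=
    hmax1 _ hN₂m hN₂sub hN₂card
  have hw1 := swap_weight (M₁ := M₁) (M₂ := M₂) w (C := comp e)
  have hw2 := swap_weight (M₁ := M₂) (M₂ := M₁) w (C := comp e)
  have heq1 : weightSum w ((M₁ \ comp e) ∪ (comp e ∩ M₂)) = weightSum w M₂ := by
    have e1 : weightSum w ((M₁ \ comp e) ∪ (comp e ∩ M₂))
        = weightSum w M₁ - (∑ f ∈ comp e ∩ M₁, w f.1 f.2) + ∑ f ∈ comp e ∩ M₂, w f.1 f.2 := hw1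
    have e2 : weightSum w ((M₂ \ comp e) ∪ (comp e ∩ M₁))
        = weightSum w M₂ - (∑ f ∈ comp e ∩ M₂, w f.1 f.2) + ∑ f ∈ comp e ∩ M₁, w f.1 f.2 := hw2
    have := hle1
    have := hle2
    unfold weightSum at *
    linarith
  have hN₁M₂ : (M₁ \ comp e) ∪ (comp e ∩ M₂) = M₂ := by
    by_contra hne
    exact hdistinct _ M₂ hN₁m hm2 hne heq1
  have hDC : D ⊆ comp e := by
    intro f hfD
    rcases Finset.mem_union.mp hfD with h | h
    · obtain ⟨hf1, hf2⟩ := Finset.mem_sdiff.mp h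
      by_contra hfC
      have hmem : f ∈ (M₁ \ comp e) ∪ (comp e ∩ M₂) :=
        Finset.mem_union_left _ (Finset.mem_sdiff.mpr ⟨hf1, hfC⟩)
      rw [hN₁M₂] at hmem
      exact hf2 hmem
    · obtain ⟨hf1, hf2⟩ := Finset.mem_sdiff.mp h
      have hmem : f ∈ (M₁ \ comp e) ∪ (comp e ∩ M₂) := by rw [hN₁M₂]; exact hf1
      rcases Finset.mem_union.mp hmem with h' | h'
      · exact absurd (Finset.mem_sdiff.mp h').1 hf2
      · exact (Finset.mem_inter.mp h').1
  have hCeqD : comp e = D := le_antisymm hCD hDC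
  have hDconn : EdgeConnected D := by
    intro f hf g hg
    have hf' : Relation.ReflTransGen R e f :=
      (Finset.mem_filter.mp (show f ∈ comp e from hCeqD ▸ hf)).2
    have hg' : Relation.ReflTransGen R e g :=
      (Finset.mem_filter.mp (show g ∈ comp e from hCeqD ▸ hg)).2
    exact ((@Relation.ReflTransGen.stdSymm _ R ⟨fun a b h => hRsymm h⟩).symm _ _ hf').trans hg'
  have hdegA : ∀ a : A, edgeDegA D a ≤ 2 := by
    intro a
    unfold edgeDegA
    have hsubf : D.filter (fun f => f.1 = a)
        ⊆ (M₁.filter (fun f => f.1 = a)) ∪ (M₂.filter (fun f => f.1 = a)) := by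
      intro f hf
      obtain ⟨hfD, hfa⟩ := Finset.mem_filter.mp hf
      rcases Finset.mem_union.mp hfD with h | h
      · exact Finset.mem_union_left _ (Finset.mem_filter.mpr ⟨(Finset.mem_sdiff.mp h).1, hfa⟩)
      · exact Finset.mem_union_right _ (Finset.mem_filter.mpr ⟨(Finset.mem_sdiff.mp h).1, hfa⟩)
    have h1 : (M₁.filter (fun f => f.1 = a)).card ≤ 1 :=
      Finset.card_le_one.mpr (fun x hx y hy => hm1.1 x (Finset.mem_filter.mp hx).1 y
        (Finset.mem_filter.mp hy).1 ((Finset.mem_filter.mp hx).2.trans (Finset.mem_filter.mp hy).2.symm))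
    have h2 : (M₂.filter (fun f => f.1 = a)).card ≤ 1 :=
      Finset.card_le_one.mpr (fun x hx y hy => hm2.1 x (Finset.mem_filter.mp hx).1 y
        (Finset.mem_filter.mp hy).1 ((Finset.mem_filter.mp hx).2.trans (Finset.mem_filter.mp hy).2.symm))
    have h3 := Finset.card_le_card hsubf
    have h4 := Finset.card_union_le (M₁.filter (fun f => f.1 = a)) (M₂.filter (fun f => f.1 = a))
    omega
  have hdegB : ∀ b : B, edgeDegB D b ≤ 2 := by
    intro b
    unfold edgeDegB
    have hsubf : D.filter (fun f => f.2 = b)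
        ⊆ (M₁.filter (fun f => f.2 = b)) ∪ (M₂.filter (fun f => f.2 = b)) := by
      intro f hf
      obtain ⟨hfD, hfa⟩ := Finset.mem_filter.mp hf
      rcases Finset.mem_union.mp hfD with h | h
      · exact Finset.mem_union_left _ (Finset.mem_filter.mpr ⟨(Finset.mem_sdiff.mp h).1, hfa⟩)
      · exact Finset.mem_union_right _ (Finset.mem_filter.mpr ⟨(Finset.mem_sdiff.mp h).1, hfa⟩)
    have h1 : (M₁.filter (fun f => f.2 = b)).card ≤ 1 :=
      Finset.card_le_one.mpr (fun x hx y hy => hm1.2 x (Finset.mem_filter.mp hx).1 y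
        (Finset.mem_filter.mp hy).1 ((Finset.mem_filter.mp hx).2.trans (Finset.mem_filter.mp hy).2.symm))
    have h2 : (M₂.filter (fun f => f.2 = b)).card ≤ 1 :=
      Finset.card_le_one.mpr (fun x hx y hy => hm2.2 x (Finset.mem_filter.mp hx).1 y
        (Finset.mem_filter.mp hy).1 ((Finset.mem_filter.mp hx).2.trans (Finset.mem_filter.mp hy).2.symm))
    have h3 := Finset.card_le_card hsubf
    have h4 := Finset.card_union_le (M₁.filter (fun f => f.2 = b)) (M₂.filter (fun f => f.2 = b))
    omega
  have hdeg1 : (∃ a : A, edgeDegA D a = 1) ∨ (∃ b : B, edgeDegB D b = 1) := by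
    left
    by_contra hno
    push_neg at hno
    have himg : (M₂ \ M₁).image Prod.fst ⊆ (M₁ \ M₂).image Prod.fst := by
      intro a ha
      obtain ⟨f, hf, rfl⟩ := Finset.mem_image.mp ha
      have hfD : f ∈ D := Finset.mem_union_right _ hf
      have hge1 : 0 < edgeDegA D f.1 :=
        Finset.card_pos.mpr ⟨f, Finset.mem_filter.mpr ⟨hfD, rfl⟩⟩
      have hne1 := hno f.1
      have hle2 := hdegA f.1
      have h2 : 1 < (D.filter (fun g => g.1 = f.1)).card := by
        unfold edgeDegA at *
        omega
      obtain ⟨x, hx, y, hy, hxy⟩ := Finset.one_lt_card.mp h2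
      have hch : ∃ g ∈ D.filter (fun h => h.1 = f.1), g ≠ f := by
        by_cases hxf : x = f
        · subst hxf
          exact ⟨y, hy, fun h => hxy h.symm⟩
        · exact ⟨x, hx, hxf⟩
      obtain ⟨g, hg, hgf⟩ := hch
      obtain ⟨hgD, hg1⟩ := Finset.mem_filter.mp hg
      have hgP : g ∈ M₁ \ M₂ := by
        rcases Finset.mem_union.mp hgD with h | h
        · exact h
        · exact absurd (hm2.1 g (Finset.mem_sdiff.mp h).1 f (Finset.mem_sdiff.mp hf).1 hg1) hgf
      exact Finset.mem_image.mpr ⟨g, hgP, hg1⟩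
    have hinj2 : Set.InjOn Prod.fst ((M₂ \ M₁ : Finset (A × B)) : Set (A × B)) := by
      intro x hx y hy hxy
      exact hm2.1 x (Finset.mem_sdiff.mp hx).1 y (Finset.mem_sdiff.mp hy).1 hxy
    have h1 : ((M₂ \ M₁).image Prod.fst).card = (M₂ \ M₁).card :=
      Finset.card_image_of_injOn hinj2
    have h2 := Finset.card_le_card himg
    have h3 := Finset.card_image_le (s := M₁ \ M₂) (f := Prod.fst)
    omega
  have hfPD : D.filter (· ∈ M₁) = M₁ \ M₂ := by
    ext f
    simp only [Finset.mem_filter, hD, Finset.mem_union, Finset.mem_sdiff]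
    constructor
    · rintro ⟨hf | hf, hf1⟩
      · exact hf
      · exact absurd hf1 hf.2
    · intro hf
      exact ⟨Or.inl hf, hf.1⟩
  have hfQD : D.filter (¬ · ∈ M₁) = M₂ \ M₁ := by
    ext f
    simp only [Finset.mem_filter, hD, Finset.mem_union, Finset.mem_sdiff]
    constructor
    · rintro ⟨hf | hf, hf1⟩
      · exact absurd hf.1 hf1
      · exact hf
    · intro hf
      exact ⟨Or.inr hf, hf.2⟩
  have hDcard : D.card = (M₁ \ M₂).card + (M₂ \ M₁).card := by
    rw [← hfPD, ← hfQD]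
    exact (Finset.card_filter_add_card_filter_not (p := (· ∈ M₁))).symm
  have hcov : ∀ f : A × B, f ∈ M₁ →
      ((∀ h ∈ M₂, h.1 ≠ f.1) ∨ (∀ h ∈ M₂, h.2 ≠ f.2)) → False := by
    intro f hf1 hfree
    have hf2 : f ∉ M₂ := by
      intro h
      rcases hfree with hfr | hfr
      · exact hfr f h rfl
      · exact hfr f h rfl
    have hfD : f ∈ D := Finset.mem_union_left _ (Finset.mem_sdiff.mpr ⟨hf1, hf2⟩)
    have hconnD : ∀ g ∈ D, ∃ n, chainIn bAdj D n e g := by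
      intro g hg
      have := hconn e heD g (hCeqD ▸ hg)
      rwa [hCeqD] at this
    have h1 := conn_pairs bAdj_symm D e (hCeqD ▸ hmemcomp e heD) hconnD
    have h2 := pairs_card hm1 hm2 D hDsubset
    have hfP : f ∈ D.filter (· ∈ M₁) := Finset.mem_filter.mpr ⟨hfD, hf1⟩
    have hsum : ∑ g ∈ D.filter (· ∈ M₁), (D.filter fun h => bAdj g h).card
        ≤ 2 * ((D.filter (· ∈ M₁)).card - 1) + 1 := by
      rw [← Finset.sum_erase_add _ _ hfP]
      have ha : ∑ g ∈ (D.filter (· ∈ M₁)).erase f, (D.filter fun h => bAdj g h).card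
          ≤ ((D.filter (· ∈ M₁)).erase f).card * 2 := by
        have := Finset.sum_le_card_nsmul ((D.filter (· ∈ M₁)).erase f)
          (fun g => (D.filter fun h => bAdj g h).card) 2
          (fun g hg => Tcard_le hm1 hm2 hDsubset
            (Finset.mem_filter.mp (Finset.mem_of_mem_erase hg)).2)
        simpa [smul_eq_mul] using this
      have hb : (D.filter fun h => bAdj f h).card ≤ 1 :=
        Tcard_le_one hm1 hm2 hDsubset hf1 hfree
      have hc : ((D.filter (· ∈ M₁)).erase f).card = (D.filter (· ∈ M₁)).card - 1 :=
        Finset.card_erase_of_mem hfP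
      have hd : 0 < (D.filter (· ∈ M₁)).card := Finset.card_pos.mpr ⟨f, hfP⟩
      omega
    have hcc : (D.filter (· ∈ M₁)).card = (M₁ \ M₂).card := by rw [hfPD]
    have hqq : (D.filter (¬ · ∈ M₁)).card = (M₂ \ M₁).card := by rw [hfQD]
    have hDsplit : (D.filter (· ∈ M₁)).card + (D.filter (¬ · ∈ M₁)).card = D.card :=
      Finset.card_filter_add_card_filter_not (p := (· ∈ M₁))
    have hp1 : 0 < (D.filter (· ∈ M₁)).card := Finset.card_pos.mpr ⟨f, hfP⟩
    rw [h2] at h1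
    have h1' : 2 * D.card ≤ 2 * (∑ g ∈ D.filter (· ∈ M₁), (D.filter fun h => bAdj g h).card) + 2 := h1
    omega
  refine ⟨⟨⟨e, heD⟩, hdegA, hdegB, hDconn, hdeg1⟩, ?_, ?_⟩
  · rintro a ⟨b, hab⟩
    by_contra hnc
    have hnc' : ∀ h ∈ M₂, h.1 ≠ (a, b).1 := by
      intro h hh heq
      exact hnc ⟨h.2, by rwa [show (a, h.2) = h from Prod.ext heq.symm rfl]⟩
    exact hcov (a, b) hab (Or.inl hnc')
  · rintro b ⟨a, hab⟩
    by_contra hnc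
    have hnc' : ∀ h ∈ M₂, h.2 ≠ (a, b).2 := by
      intro h hh heq
      exact hnc ⟨h.1, by rwa [show (h.1, b) = h from Prod.ext rfl heq.symm]⟩
    exact hcov (a, b) hab (Or.inr hnc')


end ClassEF
end

section
/- Suppose there exist k pairwise disjoint bundles I_1, I_2, …, I_k ⊆ I such that for every p ∈ {1,…,k}, |I_p| = n_p and I_p maximizes v_p(I') over all bundles I' ⊆ I with |I'| = n_p. Then every maximum-weight matching in G is class envy-free and non-wasteful. -/
open MeasureTheory ProbabilityTheory Filter
open scoped ENNReal

namespace ClassEF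

variable {A B : Type*}

lemma isMatching_subset {M M' : Finset (A × B)} (h : IsMatching M) (hsub : M' ⊆ M) :
    IsMatching M' :=
  ⟨fun e he e' he' hh => h.1 e (hsub he) e' (hsub he') hh,
   fun e he e' he' hh => h.2 e (hsub he) e' (hsub he') hh⟩

lemma weightSum_le_vval [DecidableEq A] [DecidableEq B]
    (w : A → B → ℝ) (Np : Finset A) (S : Finset B)
    (M : Finset (A × B)) (hM : IsMatching M) (hsub : M ⊆ Np ×ˢ S) :
    weightSum w M ≤ vval w Np S := by
  classical
  refine Finset.le_sup' (weightSum w) ?_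
  simp only [Finset.mem_filter, Finset.mem_powerset]
  exact ⟨hsub, hM⟩

lemma exists_vval_witness [DecidableEq A] [DecidableEq B]
    (w : A → B → ℝ) (Np : Finset A) (S : Finset B) :
    ∃ M : Finset (A × B), IsMatching M ∧ M ⊆ Np ×ˢ S ∧ weightSum w M = vval w Np S := by
  classical
  obtain ⟨M, hmem, hval⟩ := Finset.exists_mem_eq_sup'
    (⟨∅, by simp [IsMatching]⟩ : (((Np ×ˢ S).powerset.filter fun M => IsMatching M)).Nonempty)
    (weightSum w)
  simp only [Finset.mem_filter, Finset.mem_powerset] at hmem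
  exact ⟨M, hmem.2, hmem.1, by rw [vval, ← hval]⟩

lemma vval_le_of_max [DecidableEq A] [Fintype B] [DecidableEq B]
    (w : A → B → ℝ) (Np : Finset A) (Ip : Finset B)
    (hcard : Ip.card = Np.card)
    (hmax : ∀ I' : Finset B, I'.card = Np.card → vval w Np I' ≤ vval w Np Ip)
    (S : Finset B) : vval w Np S ≤ vval w Np Ip := by
  classical
  obtain ⟨M, hM, hsub, hval⟩ := exists_vval_witness w Np S
  have hfst : M.image Prod.fst ⊆ Np := by
    intro a ha
    obtain ⟨e, he, rfl⟩ := Finset.mem_image.1 ha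
    exact (Finset.mem_product.1 (hsub he)).1
  have hcard1 : (M.image Prod.fst).card = M.card :=
    Finset.card_image_of_injOn fun e he e' he' hh => hM.1 e he e' he' hh
  have hMcard : M.card ≤ Np.card := hcard1 ▸ Finset.card_le_card hfst
  have hsnd : (M.image Prod.snd).card ≤ Np.card :=
    le_trans (Finset.card_image_le) hMcard
  have hNpB : Np.card ≤ Fintype.card B := hcard ▸ Finset.card_le_univ Ip
  obtain ⟨T', hTT', hT'card⟩ := Finset.exists_superset_card_eq hsnd hNpB
  have hsub' : M ⊆ Np ×ˢ T' := by
    intro e he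
    refine Finset.mem_product.2 ⟨(Finset.mem_product.1 (hsub he)).1, ?_⟩
    exact hTT' (Finset.mem_image_of_mem Prod.snd he)
  calc vval w Np S = weightSum w M := hval.symm
    _ ≤ vval w Np T' := weightSum_le_vval w Np T' M hM hsub'
    _ ≤ vval w Np Ip := hmax T' hT'card

end ClassEF

namespace ClassEF

/-- if there exist pairwise disjoint bundles, one per class, each of
size `n_p` and maximizing the assignment valuation of its class among all bundles
of that size, then every maximum-weight matching is class envy-free and
non-wasteful. -/
theorem stmt3 {n m k : ℕ} (cls : Fin k → Finset (Fin n))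
    (hpart : IsClassPartition cls)
    (u : Fin n → Fin m → ℝ) (hu : ∀ i j, u i j ∈ Set.Icc (0 : ℝ) 1)
    (Ib : Fin k → Finset (Fin m))
    (hdisj : ∀ p q : Fin k, p ≠ q → Disjoint (Ib p) (Ib q))
    (hcard : ∀ p, (Ib p).card = (cls p).card)
    (hmax : ∀ p, ∀ I' : Finset (Fin m), I'.card = (cls p).card →
      vval u (cls p) I' ≤ vval u (cls p) (Ib p))
    (M : Finset (Fin n × Fin m)) (hM : IsMaxWeightMatching u M) :
    ClassEnvyFree u cls M ∧ NonWasteful u cls M := by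
  classical
  -- witnesses achieving vval on each optimal bundle
  choose Mb hMbm hMbs hMbv using fun p => exists_vval_witness u (cls p) (Ib p)
  -- the combined matching
  set Mstar : Finset (Fin n × Fin m) := Finset.univ.biUnion Mb with hMstar
  have hclsmem : ∀ {p e}, e ∈ Mb p → e.1 ∈ cls p ∧ e.2 ∈ Ib p := by
    intro p e he
    exact Finset.mem_product.1 (hMbs p he)
  have hMbdisj : ∀ p q : Fin k, p ≠ q → ∀ e, e ∈ Mb p → e ∉ Mb q := by
    intro p q hpq e hep heq
    exact Finset.disjoint_left.1 (hpart.2.1 p q hpq) (hclsmem hep).1 (hclsmem heq).1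
  have hMstarMatch : IsMatching Mstar := by
    constructor
    · intro e he e' he' hh
      obtain ⟨p, -, hep⟩ := Finset.mem_biUnion.1 he
      obtain ⟨q, -, heq⟩ := Finset.mem_biUnion.1 he'
      have hpq : p = q := by
        by_contra hne
        exact Finset.disjoint_left.1 (hpart.2.1 p q hne) (hclsmem hep).1
          (hh ▸ (hclsmem heq).1)
      exact (hMbm p).1 e hep e' (hpq ▸ heq) hh
    · intro e he e' he' hh
      obtain ⟨p, -, hep⟩ := Finset.mem_biUnion.1 he
      obtain ⟨q, -, heq⟩ := Finset.mem_biUnion.1 he'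
      have hpq : p = q := by
        by_contra hne
        exact Finset.disjoint_left.1 (hdisj p q hne) (hclsmem hep).2
          (hh ▸ (hclsmem heq).2)
      exact (hMbm p).2 e hep e' (hpq ▸ heq) hh
  have hMstarW : weightSum u Mstar = ∑ p : Fin k, vval u (cls p) (Ib p) := by
    rw [hMstar, weightSum, Finset.sum_biUnion]
    · exact Finset.sum_congr rfl fun p _ => hMbv p
    · intro p hp q hq hpq
      refine Finset.disjoint_left.2 fun e hep heq => hMbdisj p q hpq e hep heq
  -- each class utility is at most vval of its bundle
  have hutil_le : ∀ p, classUtil u M (cls p) ≤ vval u (cls p) (bundleOf M (cls p)) := by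
    intro p
    have hfil : (M.filter fun e => e.1 ∈ cls p) ⊆ cls p ×ˢ bundleOf M (cls p) := by
      intro e he
      rw [Finset.mem_filter] at he
      refine Finset.mem_product.2 ⟨he.2, ?_⟩
      exact Finset.mem_image_of_mem Prod.snd (Finset.mem_filter.2 he)
    exact weightSum_le_vval u (cls p) (bundleOf M (cls p)) _
      (isMatching_subset hM.1 (Finset.filter_subset _ _)) hfil
  -- each vval is at most the optimum
  have hopt : ∀ p (S : Finset (Fin m)), vval u (cls p) S ≤ vval u (cls p) (Ib p) :=
    fun p S => vval_le_of_max u (cls p) (Ib p) (hcard p) (hmax p) S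
  -- the total weight of M splits over classes
  have hsplit : ∑ p : Fin k, classUtil u M (cls p) = weightSum u M := by
    have hcu : ∀ p, classUtil u M (cls p)
        = ∑ e ∈ M, if e.1 ∈ cls p then u e.1 e.2 else 0 := by
      intro p; exact Finset.sum_filter _ _
    simp only [hcu]
    rw [Finset.sum_comm, weightSum]
    refine Finset.sum_congr rfl fun e he => ?_
    obtain ⟨p0, -, hp0⟩ := Finset.mem_biUnion.1
      (hpart.2.2 ▸ Finset.mem_univ e.1 : e.1 ∈ Finset.univ.biUnion cls)
    rw [Finset.sum_eq_single p0]
    · simp [hp0]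
    · intro b _ hb
      have : e.1 ∉ cls b := fun hmem =>
        Finset.disjoint_left.1 (hpart.2.1 b p0 hb) hmem hp0
      simp [this]
    · intro h; exact absurd (Finset.mem_univ p0) h
  -- chain of inequalities forces equality
  have hge : ∑ p : Fin k, vval u (cls p) (Ib p) ≤ ∑ p : Fin k, classUtil u M (cls p) := by
    rw [hsplit, ← hMstarW]
    exact hM.2 Mstar hMstarMatch
  have hle : ∀ p ∈ (Finset.univ : Finset (Fin k)),
      classUtil u M (cls p) ≤ vval u (cls p) (Ib p) :=
    fun p _ => le_trans (hutil_le p) (hopt p _)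
  have heqsum : ∑ p : Fin k, classUtil u M (cls p)
      = ∑ p : Fin k, vval u (cls p) (Ib p) :=
    le_antisymm (Finset.sum_le_sum hle) hge
  have heq : ∀ p, classUtil u M (cls p) = vval u (cls p) (Ib p) := by
    intro p
    exact (Finset.sum_eq_sum_iff_of_le hle).1 heqsum p (Finset.mem_univ p)
  constructor
  · intro p q _
    exact le_trans (hopt p (bundleOf M (cls q))) (heq p).symm.le
  · intro j hw
    have key : ∀ p, ¬ vval u (cls p) (bundleOf M (cls p))
        < vval u (cls p) (insert j (bundleOf M (cls p))) := by
      intro p hlt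
      have h1 : vval u (cls p) (insert j (bundleOf M (cls p))) ≤ vval u (cls p) (Ib p) :=
        hopt p _
      have h2 : vval u (cls p) (Ib p) ≤ vval u (cls p) (bundleOf M (cls p)) :=
        (heq p) ▸ hutil_le p
      linarith
    rcases hw with ⟨-, p, hlt⟩ | ⟨q, -, -, p, -, hlt⟩
    · exact key p hlt
    · exact key p hlt


end ClassEF
end
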